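/- arXiv:2006.16446 — 4 statements merged into one kernel-verified Lean document; each statement's English description precedes it below -/
import Mathlib

section
/- Assume the Poisson-solution setting below. Then for every g ∈ M₀ one has the identity ℰ_β(w̄ − g, w̄ + g) = 1/c − ℰ_β(g − ŵ, g − ŵ), where c = ∫_D u ξ dx. Consequently, if ℰ_β(h,h) ≥ 0 for every h ∈ M₀, then ℰ_β(w̄ − g, w̄ + g) ≤ 1/c for every g ∈ M₀. -/
open MeasureTheory

noncomputable section

/-- Partial derivative of `f` in the `i`-th coordinate direction. -/
def pd {d : ℕ} (f : (Fin d → ℝ) → ℝ) (i : Fin d) (x : Fin d → ℝ) : ℝ :=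
  fderiv ℝ f x (Pi.single i 1)

/-- Divergence of a vector field on `ℝ^d`: `div F = Σ_i ∂_i F_i`. -/
def divg {d : ℕ} (F : (Fin d → ℝ) → (Fin d → ℝ)) (x : Fin d → ℝ) : ℝ :=
  ∑ i, fderiv ℝ (fun y => F y i) x (Pi.single i 1)

/-- The vector field `a∇g`, i.e. `(a∇g)_i = Σ_j a_{ij} ∂_j g`. -/
def aGrad {d : ℕ} (a : (Fin d → ℝ) → Matrix (Fin d) (Fin d) ℝ)
    (g : (Fin d → ℝ) → ℝ) (x : Fin d → ℝ) : Fin d → ℝ :=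
  fun i => ∑ j, a x i j * pd g j x

/-- The operator `Lg = ∇·(a∇g) + b·∇g`. -/
def Lop {d : ℕ} (a : (Fin d → ℝ) → Matrix (Fin d) (Fin d) ℝ)
    (b : (Fin d → ℝ) → (Fin d → ℝ)) (g : (Fin d → ℝ) → ℝ) (x : Fin d → ℝ) : ℝ :=
  divg (aGrad a g) x + ∑ i, b x i * pd g i x

/-- The formal adjoint `L̃f = ∇·(a∇f) − b·∇f − div(b) f`. -/
def Ladj {d : ℕ} (a : (Fin d → ℝ) → Matrix (Fin d) (Fin d) ℝ)
    (b : (Fin d → ℝ) → (Fin d → ℝ)) (f : (Fin d → ℝ) → ℝ) (x : Fin d → ℝ) : ℝ :=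
  divg (aGrad a f) x - (∑ i, b x i * pd f i x) - divg b x * f x

/-- `∇f · a ∇g = Σ_{i,j} (∂_i f) a_{ij} (∂_j g)`. -/
def quadF {d : ℕ} (a : (Fin d → ℝ) → Matrix (Fin d) (Fin d) ℝ)
    (f g : (Fin d → ℝ) → ℝ) (x : Fin d → ℝ) : ℝ :=
  ∑ i, ∑ j, pd f i x * a x i j * pd g j x

/-- `f` is C² on an open neighborhood of the closure of `D`. -/
def C2Near {d : ℕ} (D : Set (Fin d → ℝ)) (f : (Fin d → ℝ) → ℝ) : Prop :=
  ∃ U : Set (Fin d → ℝ), IsOpen U ∧ closure D ⊆ U ∧ ContDiffOn ℝ 2 f U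

/-- A vector field is C¹ on an open neighborhood of the closure of `D`. -/
def C1NearVF {d : ℕ} (D : Set (Fin d → ℝ)) (F : (Fin d → ℝ) → (Fin d → ℝ)) : Prop :=
  ∃ U : Set (Fin d → ℝ), IsOpen U ∧ closure D ⊆ U ∧ ∀ i, ContDiffOn ℝ 1 (fun x => F x i) U

/-- `D` has the divergence property: `∫_D div F = 0` for every vector field `F` which is
C¹ on an open neighborhood of the closure of `D` and vanishes on the frontier of `D`. -/
def DivProp {d : ℕ} (D : Set (Fin d → ℝ)) : Prop :=
  ∀ F : (Fin d → ℝ) → (Fin d → ℝ), C1NearVF D F → (∀ x ∈ frontier D, F x = 0) →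
    ∫ x in D, divg F x = 0

/-- The bilinear form `ℰ_β(f,g) = ∫_D f ((β−L)g) dx`. -/
def Eform {d : ℕ} (D : Set (Fin d → ℝ)) (a : (Fin d → ℝ) → Matrix (Fin d) (Fin d) ℝ)
    (b : (Fin d → ℝ) → (Fin d → ℝ)) (β : ℝ) (f g : (Fin d → ℝ) → ℝ) : ℝ :=
  ∫ x in D, f x * (β * g x - Lop a b g x)

/-- `M_δ`: functions that are C² near the closure of `D`, vanish on `∂D`, and have
`∫_D h ξ dx = δ`. -/
def MemM {d : ℕ} (D : Set (Fin d → ℝ)) (ξ : (Fin d → ℝ) → ℝ) (δ : ℝ)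
    (h : (Fin d → ℝ) → ℝ) : Prop :=
  C2Near D h ∧ (∀ x ∈ frontier D, h x = 0) ∧ (∫ x in D, h x * ξ x) = δ


section Aux
variable {d : ℕ} {U : Set (Fin d → ℝ)}
  {a : (Fin d → ℝ) → Matrix (Fin d) (Fin d) ℝ} {b : (Fin d → ℝ) → (Fin d → ℝ)}

lemma pd_contDiffOn {f : (Fin d → ℝ) → ℝ} (hU : IsOpen U)
    (hf : ContDiffOn ℝ 2 f U) (j : Fin d) : ContDiffOn ℝ 1 (pd f j) U := by
  have h1 : ContDiffOn ℝ 1 (fun x => fderiv ℝ f x) U :=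
    hf.fderiv_of_isOpen hU (by norm_num)
  exact h1.clm_apply contDiffOn_const

lemma aGrad_contDiffOn (ha : ∀ i j, ContDiff ℝ 1 (fun x => a x i j))
    {f : (Fin d → ℝ) → ℝ} (hU : IsOpen U) (hf : ContDiffOn ℝ 2 f U) (i : Fin d) :
    ContDiffOn ℝ 1 (fun y => aGrad a f y i) U := by
  unfold aGrad
  exact ContDiffOn.sum fun j _ => ((ha i j).contDiffOn).mul (pd_contDiffOn hU hf j)

lemma diffAt_of_c1 {f : (Fin d → ℝ) → ℝ} (hU : IsOpen U) (hf : ContDiffOn ℝ 1 f U)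
    {x : Fin d → ℝ} (hx : x ∈ U) : DifferentiableAt ℝ f x :=
  (hf.differentiableOn one_ne_zero).differentiableAt (hU.mem_nhds hx)

lemma pd_continuousOn {f : (Fin d → ℝ) → ℝ} (hU : IsOpen U)
    (hf : ContDiffOn ℝ 1 f U) (j : Fin d) : ContinuousOn (pd f j) U := by
  have h1 : ContinuousOn (fun x => fderiv ℝ f x) U :=
    hf.continuousOn_fderiv_of_isOpen hU le_rfl
  exact (continuous_id.clm_apply continuous_const).comp_continuousOn h1

lemma Lop_continuousOn (ha : ∀ i j, ContDiff ℝ 1 (fun x => a x i j))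
    (hb : ∀ i, ContDiff ℝ 1 (fun x => b x i))
    {f : (Fin d → ℝ) → ℝ} (hU : IsOpen U) (hf : ContDiffOn ℝ 2 f U) :
    ContinuousOn (Lop a b f) U := by
  unfold Lop divg
  apply ContinuousOn.add
  · apply continuousOn_finset_sum
    intro i _
    exact pd_continuousOn hU (aGrad_contDiffOn ha hU hf i) i
  · apply continuousOn_finset_sum
    intro i _
    exact ((hb i).continuous.continuousOn).mul
      (pd_continuousOn hU (hf.of_le (by norm_num)) i)

lemma pd_lin3 {f g h : (Fin d → ℝ) → ℝ} {x : Fin d → ℝ}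
    (Hf : DifferentiableAt ℝ f x) (Hg : DifferentiableAt ℝ g x)
    (Hh : DifferentiableAt ℝ h x) (p q r : ℝ) (j : Fin d) :
    pd (fun y => p * f y + q * g y + r * h y) j x
      = p * pd f j x + q * pd g j x + r * pd h j x := by
  unfold pd
  rw [show fderiv ℝ (fun y => p * f y + q * g y + r * h y) x = _ from
    (((Hf.hasFDerivAt.const_mul p).add (Hg.hasFDerivAt.const_mul q)).add
    (Hh.hasFDerivAt.const_mul r)).fderiv]
  simp [smul_eq_mul]

lemma Lop_lin3 {f g h : (Fin d → ℝ) → ℝ} (hU : IsOpen U)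
    (ha : ∀ i j, ContDiff ℝ 1 (fun x => a x i j))
    (hf : ContDiffOn ℝ 2 f U) (hg : ContDiffOn ℝ 2 g U) (hh : ContDiffOn ℝ 2 h U)
    (p q r : ℝ) {x : Fin d → ℝ} (hx : x ∈ U) :
    Lop a b (fun y => p * f y + q * g y + r * h y) x
      = p * Lop a b f x + q * Lop a b g x + r * Lop a b h x := by
  have dAt : ∀ k : (Fin d → ℝ) → ℝ, ContDiffOn ℝ 2 k U → ∀ y ∈ U,
      DifferentiableAt ℝ k y := fun k hk y hy =>
    diffAt_of_c1 hU (hk.of_le (by norm_num)) hy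
  have hAG : ∀ y ∈ U, ∀ i, aGrad a (fun y => p * f y + q * g y + r * h y) y i
      = p * aGrad a f y i + q * aGrad a g y i + r * aGrad a h y i := by
    intro y hy i
    unfold aGrad
    rw [Finset.mul_sum, Finset.mul_sum, Finset.mul_sum,
      ← Finset.sum_add_distrib, ← Finset.sum_add_distrib]
    refine Finset.sum_congr rfl fun j _ => ?_
    rw [pd_lin3 (dAt f hf y hy) (dAt g hg y hy) (dAt h hh y hy)]
    ring
  have hdiv : divg (aGrad a (fun y => p * f y + q * g y + r * h y)) x
      = p * divg (aGrad a f) x + q * divg (aGrad a g) x + r * divg (aGrad a h) x := by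
    unfold divg
    rw [Finset.mul_sum, Finset.mul_sum, Finset.mul_sum,
      ← Finset.sum_add_distrib, ← Finset.sum_add_distrib]
    refine Finset.sum_congr rfl fun i _ => ?_
    have hev : (fun y => aGrad a (fun y => p * f y + q * g y + r * h y) y i)
        =ᶠ[nhds x] (fun y => p * aGrad a f y i + q * aGrad a g y i + r * aGrad a h y i) :=
      Filter.eventuallyEq_of_mem (hU.mem_nhds hx) (fun y hy => hAG y hy i)
    rw [hev.fderiv_eq]
    have Df := diffAt_of_c1 hU (aGrad_contDiffOn ha hU hf i) hx
    have Dg := diffAt_of_c1 hU (aGrad_contDiffOn ha hU hg i) hx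
    have Dh := diffAt_of_c1 hU (aGrad_contDiffOn ha hU hh i) hx
    rw [show fderiv ℝ (fun y => p * aGrad a f y i + q * aGrad a g y i + r * aGrad a h y i) x
      = _ from (((Df.hasFDerivAt.const_mul p).add (Dg.hasFDerivAt.const_mul q)).add
      (Dh.hasFDerivAt.const_mul r)).fderiv]
    simp [smul_eq_mul]
  have hgrad : (∑ i, b x i * pd (fun y => p * f y + q * g y + r * h y) i x)
      = p * (∑ i, b x i * pd f i x) + q * (∑ i, b x i * pd g i x)
        + r * (∑ i, b x i * pd h i x) := by
    rw [Finset.mul_sum, Finset.mul_sum, Finset.mul_sum,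
      ← Finset.sum_add_distrib, ← Finset.sum_add_distrib]
    refine Finset.sum_congr rfl fun i _ => ?_
    rw [pd_lin3 (dAt f hf x hx) (dAt g hg x hx) (dAt h hh x hx)]
    ring
  unfold Lop
  rw [hdiv, hgrad]
  ring

lemma div_identity (hU : IsOpen U) (ha : ∀ i j, ContDiff ℝ 1 (fun x => a x i j))
    (hsym : ∀ x i j, a x i j = a x j i) (hb : ∀ i, ContDiff ℝ 1 (fun x => b x i))
    {f g : (Fin d → ℝ) → ℝ} (hf : ContDiffOn ℝ 2 f U) (hg : ContDiffOn ℝ 2 g U)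
    {x : Fin d → ℝ} (hx : x ∈ U) :
    divg (fun y i => f y * aGrad a g y i - g y * aGrad a f y i + f y * g y * b y i) x
      = f x * Lop a b g x - g x * Ladj a b f x := by
  have Df : DifferentiableAt ℝ f x := diffAt_of_c1 hU (hf.of_le (by norm_num)) hx
  have Dg : DifferentiableAt ℝ g x := diffAt_of_c1 hU (hg.of_le (by norm_num)) hx
  have key : ∀ i : Fin d,
      fderiv ℝ (fun y => f y * aGrad a g y i - g y * aGrad a f y i + f y * g y * b y i) x
        (Pi.single i 1)
      = f x * fderiv ℝ (fun y => aGrad a g y i) x (Pi.single i 1)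
        + aGrad a g x i * pd f i x
        - (g x * fderiv ℝ (fun y => aGrad a f y i) x (Pi.single i 1)
            + aGrad a f x i * pd g i x)
        + (f x * g x * fderiv ℝ (fun y => b y i) x (Pi.single i 1)
            + b x i * (f x * pd g i x + g x * pd f i x)) := by
    intro i
    have DG : DifferentiableAt ℝ (fun y => aGrad a g y i) x :=
      diffAt_of_c1 hU (aGrad_contDiffOn ha hU hg i) hx
    have DF : DifferentiableAt ℝ (fun y => aGrad a f y i) x :=
      diffAt_of_c1 hU (aGrad_contDiffOn ha hU hf i) hx
    have DB : DifferentiableAt ℝ (fun y => b y i) x := ((hb i).differentiable one_ne_zero) x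
    have H := (((Df.hasFDerivAt.mul DG.hasFDerivAt).sub
        (Dg.hasFDerivAt.mul DF.hasFDerivAt)).add
        (((Df.hasFDerivAt.mul Dg.hasFDerivAt)).mul DB.hasFDerivAt)).fderiv
    rw [show fderiv ℝ (fun y => f y * aGrad a g y i - g y * aGrad a f y i + f y * g y * b y i) x
      = _ from H]
    simp [pd, smul_eq_mul]
    ring
  have quad : (∑ i, aGrad a g x i * pd f i x) = ∑ i, aGrad a f x i * pd g i x := by
    unfold aGrad
    simp only [Finset.sum_mul]
    rw [Finset.sum_comm]
    refine Finset.sum_congr rfl fun j _ => Finset.sum_congr rfl fun i _ => ?_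
    rw [hsym x i j]; ring
  unfold divg
  rw [Finset.sum_congr rfl fun i _ => key i]
  simp only [Finset.sum_add_distrib, Finset.sum_sub_distrib, ← Finset.mul_sum]
  rw [quad]
  have hb2 : (∑ i, b x i * (f x * pd g i x + g x * pd f i x))
      = f x * (∑ i, b x i * pd g i x) + g x * (∑ i, b x i * pd f i x) := by
    rw [Finset.mul_sum, Finset.mul_sum, ← Finset.sum_add_distrib]
    exact Finset.sum_congr rfl fun i _ => by ring
  rw [hb2]
  unfold Lop Ladj divg
  ring

lemma integrableOn_of_contOn {D : Set (Fin d → ℝ)} (hDb : Bornology.IsBounded D)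
    {f : (Fin d → ℝ) → ℝ} (hclo : closure D ⊆ U) (h : ContinuousOn f U) :
    IntegrableOn f D := by
  have hK : IsCompact (closure D) := hDb.isCompact_closure
  exact ((h.mono hclo).integrableOn_compact hK).mono_set subset_closure

lemma Ladj_continuousOn (ha : ∀ i j, ContDiff ℝ 1 (fun x => a x i j))
    (hb : ∀ i, ContDiff ℝ 1 (fun x => b x i))
    {f : (Fin d → ℝ) → ℝ} (hU : IsOpen U) (hf : ContDiffOn ℝ 2 f U) :
    ContinuousOn (Ladj a b f) U := by
  unfold Ladj
  apply ContinuousOn.sub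
  apply ContinuousOn.sub
  · apply continuousOn_finset_sum; intro i _
    exact pd_continuousOn hU (aGrad_contDiffOn ha hU hf i) i
  · apply continuousOn_finset_sum; intro i _
    exact ((hb i).continuous.continuousOn).mul
      (pd_continuousOn hU (hf.of_le (by norm_num)) i)
  · refine ContinuousOn.mul ?_ hf.continuousOn
    unfold divg
    apply continuousOn_finset_sum; intro i _
    exact pd_continuousOn hU ((hb i).contDiffOn) i

lemma adjoint_int {D : Set (Fin d → ℝ)} (hD : IsOpen D) (hDb : Bornology.IsBounded D)
    (hdiv : DivProp D) (hU : IsOpen U) (hclo : closure D ⊆ U)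
    (ha : ∀ i j, ContDiff ℝ 1 (fun x => a x i j))
    (hsym : ∀ x i j, a x i j = a x j i) (hb : ∀ i, ContDiff ℝ 1 (fun x => b x i))
    {f g : (Fin d → ℝ) → ℝ} (hf : ContDiffOn ℝ 2 f U) (hg : ContDiffOn ℝ 2 g U)
    (hf0 : ∀ x ∈ frontier D, f x = 0) (hg0 : ∀ x ∈ frontier D, g x = 0) (β : ℝ) :
    ∫ x in D, f x * (β * g x - Lop a b g x) = ∫ x in D, g x * (β * f x - Ladj a b f x) := by
  set F : (Fin d → ℝ) → (Fin d → ℝ) :=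
    fun y i => f y * aGrad a g y i - g y * aGrad a f y i + f y * g y * b y i with hF
  have hC1 : C1NearVF D F := by
    refine ⟨U, hU, hclo, fun i => ?_⟩
    have hf1 : ContDiffOn ℝ 1 f U := hf.of_le one_le_two
    have hg1 : ContDiffOn ℝ 1 g U := hg.of_le one_le_two
    exact ((hf1.mul (aGrad_contDiffOn ha hU hg i)).sub
      (hg1.mul (aGrad_contDiffOn ha hU hf i))).add
      ((hf1.mul hg1).mul ((hb i).contDiffOn))
  have h0 : ∀ x ∈ frontier D, F x = 0 := by
    intro x hx; funext i; simp [hF, hf0 x hx, hg0 x hx]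
  have hint := hdiv F hC1 h0
  have hDsub : D ⊆ U := subset_closure.trans hclo
  have hcongr : ∀ x ∈ D, divg F x = f x * Lop a b g x - g x * Ladj a b f x :=
    fun x hx => div_identity hU ha hsym hb hf hg (hDsub hx)
  have h2 : ∫ x in D, (f x * Lop a b g x - g x * Ladj a b f x) = 0 := by
    rw [← setIntegral_congr_fun hD.measurableSet hcongr]; exact hint
  have hfc : ContinuousOn f U := hf.continuousOn
  have hgc : ContinuousOn g U := hg.continuousOn
  have hLg : ContinuousOn (Lop a b g) U := Lop_continuousOn ha hb hU hg
  have hLadjf : ContinuousOn (Ladj a b f) U := Ladj_continuousOn ha hb hU hf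
  have I1 : IntegrableOn (fun x => f x * (β * g x - Lop a b g x)) D :=
    integrableOn_of_contOn hDb hclo
      (hfc.mul ((continuousOn_const.mul hgc).sub hLg))
  have I2 : IntegrableOn (fun x => g x * (β * f x - Ladj a b f x)) D :=
    integrableOn_of_contOn hDb hclo
      (hgc.mul ((continuousOn_const.mul hfc).sub hLadjf))
  have h3 : ∫ x in D, (f x * (β * g x - Lop a b g x) - g x * (β * f x - Ladj a b f x))
      = (∫ x in D, (f x * (β * g x - Lop a b g x))) - ∫ x in D, (g x * (β * f x - Ladj a b f x)) :=
    integral_sub I1 I2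
  have h4 : ∀ x ∈ D, f x * (β * g x - Lop a b g x) - g x * (β * f x - Ladj a b f x)
      = -(f x * Lop a b g x - g x * Ladj a b f x) := fun x hx => by ring
  have h5 : ∫ x in D, (f x * (β * g x - Lop a b g x) - g x * (β * f x - Ladj a b f x)) = 0 := by
    rw [setIntegral_congr_fun hD.measurableSet h4, integral_neg, h2, neg_zero]
  linarith [h3 ▸ h5]

end Aux

set_option maxHeartbeats 2000000 in
/-- the expansion identity `ℰ_β(w̄−g, w̄+g) = 1/c − ℰ_β(g−ŵ, g−ŵ)` for `g ∈ M₀`,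
and the resulting upper bound when `ℰ_β` is nonnegative on `M₀`. -/
theorem stmt6 {d : ℕ} (D : Set (Fin d → ℝ)) (hD : IsOpen D)
    (hDb : Bornology.IsBounded D) (hdiv : DivProp D)
    (a : (Fin d → ℝ) → Matrix (Fin d) (Fin d) ℝ)
    (ha : ∀ i j, ContDiff ℝ 1 (fun x => a x i j))
    (hsym : ∀ x i j, a x i j = a x j i)
    (b : (Fin d → ℝ) → (Fin d → ℝ)) (hb : ∀ i, ContDiff ℝ 1 (fun x => b x i))
    (β : ℝ) (hβ : 0 ≤ β)
    (ξ : (Fin d → ℝ) → ℝ)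
    (hξ : ∃ U : Set (Fin d → ℝ), IsOpen U ∧ closure D ⊆ U ∧ ContinuousOn ξ U)
    (u ut : (Fin d → ℝ) → ℝ)
    (hu : C2Near D u) (hu0 : ∀ x ∈ frontier D, u x = 0)
    (hueq : ∀ x ∈ D, β * u x - Lop a b u x = ξ x)
    (hut : C2Near D ut) (hut0 : ∀ x ∈ frontier D, ut x = 0)
    (huteq : ∀ x ∈ D, β * ut x - Ladj a b ut x = ξ x)
    (c : ℝ) (hc : c = ∫ x in D, u x * ξ x) (hc0 : c ≠ 0)
    (wbar what : (Fin d → ℝ) → ℝ)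
    (hwbar : ∀ x, wbar x = (u x / c + ut x / c) / 2)
    (hwhat : ∀ x, what x = (u x / c - ut x / c) / 2) :
    (∀ g, MemM D ξ 0 g →
      Eform D a b β (wbar - g) (wbar + g)
        = 1 / c - Eform D a b β (g - what) (g - what)) ∧
    ((∀ h, MemM D ξ 0 h → 0 ≤ Eform D a b β h h) →
      ∀ g, MemM D ξ 0 g → Eform D a b β (wbar - g) (wbar + g) ≤ 1 / c) := by
  -- common neighborhood for u, ut, ξ
  obtain ⟨Uu, hUu, hcu, hCu⟩ := hu
  obtain ⟨Ut, hUt, hct, hCt⟩ := hut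
  obtain ⟨Uξ, hUξ, hcξ, hCξ⟩ := hξ
  set V : Set (Fin d → ℝ) := Uu ∩ Ut ∩ Uξ with hVdef
  have hV : IsOpen V := (hUu.inter hUt).inter hUξ
  have hcV : closure D ⊆ V :=
    Set.subset_inter (Set.subset_inter hcu hct) hcξ
  have Cu : ContDiffOn ℝ 2 u V := hCu.mono (fun x hx => hx.1.1)
  have Ct : ContDiffOn ℝ 2 ut V := hCt.mono (fun x hx => hx.1.2)
  have Cξ : ContinuousOn ξ V := hCξ.mono (fun x hx => hx.2)
  have hDV : D ⊆ V := subset_closure.trans hcV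
  -- ∫ ut ξ = c
  have hutξ : ∫ x in D, ut x * ξ x = c := by
    have h := adjoint_int hD hDb hdiv hV hcV ha hsym hb Ct Cu hut0 hu0 β
    calc ∫ x in D, ut x * ξ x
        = ∫ x in D, ut x * (β * u x - Lop a b u x) :=
          (setIntegral_congr_fun hD.measurableSet fun x hx => by simp only [hueq x hx]).symm
      _ = ∫ x in D, u x * (β * ut x - Ladj a b ut x) := h
      _ = ∫ x in D, u x * ξ x :=
          setIntegral_congr_fun hD.measurableSet fun x hx => by simp only [huteq x hx]
      _ = c := hc.symm
  -- ∫ ut (β ut − L ut) = c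
  have hutKut : ∫ x in D, ut x * (β * ut x - Lop a b ut x) = c := by
    rw [adjoint_int hD hDb hdiv hV hcV ha hsym hb Ct Ct hut0 hut0 β]
    rw [setIntegral_congr_fun hD.measurableSet
      (fun x hx => by simp only [huteq x hx] :
        Set.EqOn (fun x => ut x * (β * ut x - Ladj a b ut x)) (fun x => ut x * ξ x) D)]
    exact hutξ
  have main : ∀ g, MemM D ξ 0 g →
      Eform D a b β (wbar - g) (wbar + g)
        = 1 / c - Eform D a b β (g - what) (g - what) := by
    intro g hgM
    obtain ⟨⟨Ug, hUg, hcg, hCg⟩, hg0, hgξ⟩ := hgM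
    set W : Set (Fin d → ℝ) := V ∩ Ug with hWdef
    have hW : IsOpen W := hV.inter hUg
    have hcW : closure D ⊆ W := Set.subset_inter hcV hcg
    have hDW : D ⊆ W := subset_closure.trans hcW
    have Cu' : ContDiffOn ℝ 2 u W := Cu.mono Set.inter_subset_left
    have Ct' : ContDiffOn ℝ 2 ut W := Ct.mono Set.inter_subset_left
    have Cg' : ContDiffOn ℝ 2 g W := hCg.mono Set.inter_subset_right
    have Cξ' : ContinuousOn ξ W := Cξ.mono Set.inter_subset_left
    have Ccombo : ∀ p q r : ℝ,
        ContDiffOn ℝ 2 (fun y => p * u y + q * ut y + r * g y) W := fun p q r =>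
      ((contDiffOn_const.mul Cu').add (contDiffOn_const.mul Ct')).add
        (contDiffOn_const.mul Cg')
    have vcombo : ∀ (p q r : ℝ) (x), x ∈ frontier D →
        p * u x + q * ut x + r * g x = 0 := by
      intro p q r x hx
      rw [hu0 x hx, hut0 x hx, hg0 x hx]; ring
    have e0 : wbar - g = fun y => 1 / (2 * c) * u y + 1 / (2 * c) * ut y + (-1) * g y := by
      funext y
      have := hwbar y
      simp only [Pi.sub_apply, this]
      field_simp; ring
    have e1 : wbar + g = fun y => 1 / (2 * c) * u y + 1 / (2 * c) * ut y + 1 * g y := by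
      funext y
      have := hwbar y
      simp only [Pi.add_apply, this]
      field_simp
    have e2 : g - what = fun y => -(1 / (2 * c)) * u y + 1 / (2 * c) * ut y + 1 * g y := by
      funext y
      have := hwhat y
      simp only [Pi.sub_apply, this]
      field_simp; ring
    -- pointwise expansion identity on D
    have hpt : ∀ x ∈ D,
        (1 / (2 * c) * u x + 1 / (2 * c) * ut x + (-1) * g x) *
            (β * (1 / (2 * c) * u x + 1 / (2 * c) * ut x + 1 * g x)
              - Lop a b (fun y => 1 / (2 * c) * u y + 1 / (2 * c) * ut y + 1 * g y) x)
          + (-(1 / (2 * c)) * u x + 1 / (2 * c) * ut x + 1 * g x) *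
            (β * (-(1 / (2 * c)) * u x + 1 / (2 * c) * ut x + 1 * g x)
              - Lop a b (fun y => -(1 / (2 * c)) * u y + 1 / (2 * c) * ut y + 1 * g y) x)
        = 1 / (2 * c ^ 2) * (u x * ξ x)
            + 1 / (2 * c ^ 2) * (ut x * (β * ut x - Lop a b ut x))
            + 1 / c * (ut x * (β * g x - Lop a b g x))
            - 1 / c * (g x * ξ x) := by
      intro x hx
      have hxW : x ∈ W := hDW hx
      rw [Lop_lin3 hW ha Cu' Ct' Cg' (1 / (2 * c)) (1 / (2 * c)) 1 hxW,
        Lop_lin3 hW ha Cu' Ct' Cg' (-(1 / (2 * c))) (1 / (2 * c)) 1 hxW]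
      have hLu : Lop a b u x = β * u x - ξ x := by
        have := hueq x hx; linarith
      rw [hLu]
      field_simp
      ring
    -- integrability of the two quadratic integrands
    have I1 : IntegrableOn (fun x =>
        (1 / (2 * c) * u x + 1 / (2 * c) * ut x + (-1) * g x) *
          (β * (1 / (2 * c) * u x + 1 / (2 * c) * ut x + 1 * g x)
            - Lop a b (fun y => 1 / (2 * c) * u y + 1 / (2 * c) * ut y + 1 * g y) x)) D :=
      integrableOn_of_contOn hDb hcW
        (((Ccombo (1 / (2 * c)) (1 / (2 * c)) (-1)).continuousOn).mul
          ((continuousOn_const.mul (Ccombo (1 / (2 * c)) (1 / (2 * c)) 1).continuousOn).sub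
            (Lop_continuousOn ha hb hW (Ccombo (1 / (2 * c)) (1 / (2 * c)) 1))))
    have I2 : IntegrableOn (fun x =>
        (-(1 / (2 * c)) * u x + 1 / (2 * c) * ut x + 1 * g x) *
          (β * (-(1 / (2 * c)) * u x + 1 / (2 * c) * ut x + 1 * g x)
            - Lop a b (fun y => -(1 / (2 * c)) * u y + 1 / (2 * c) * ut y + 1 * g y) x)) D :=
      integrableOn_of_contOn hDb hcW
        (((Ccombo (-(1 / (2 * c))) (1 / (2 * c)) 1).continuousOn).mul
          ((continuousOn_const.mul (Ccombo (-(1 / (2 * c))) (1 / (2 * c)) 1).continuousOn).sub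
            (Lop_continuousOn ha hb hW (Ccombo (-(1 / (2 * c))) (1 / (2 * c)) 1))))
    -- integrability of the four pieces on the right
    have Ju : IntegrableOn (fun x => u x * ξ x) D :=
      integrableOn_of_contOn hDb hcW (Cu'.continuousOn.mul Cξ')
    have Jut : IntegrableOn (fun x => ut x * (β * ut x - Lop a b ut x)) D :=
      integrableOn_of_contOn hDb hcW (Ct'.continuousOn.mul
        ((continuousOn_const.mul Ct'.continuousOn).sub (Lop_continuousOn ha hb hW Ct')))
    have Jug : IntegrableOn (fun x => ut x * (β * g x - Lop a b g x)) D :=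
      integrableOn_of_contOn hDb hcW (Ct'.continuousOn.mul
        ((continuousOn_const.mul Cg'.continuousOn).sub (Lop_continuousOn ha hb hW Cg')))
    have Jgξ : IntegrableOn (fun x => g x * ξ x) D :=
      integrableOn_of_contOn hDb hcW (Cg'.continuousOn.mul Cξ')
    -- ∫ ut (β g − L g) = 0
    have hutKg : ∫ x in D, ut x * (β * g x - Lop a b g x) = 0 := by
      rw [adjoint_int hD hDb hdiv hW hcW ha hsym hb Ct' Cg' hut0 hg0 β]
      rw [setIntegral_congr_fun hD.measurableSet
        (fun x hx => by simp only [huteq x hx] :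
          Set.EqOn (fun x => g x * (β * ut x - Ladj a b ut x)) (fun x => g x * ξ x) D)]
      exact hgξ
    have key : Eform D a b β (fun y => 1 / (2 * c) * u y + 1 / (2 * c) * ut y + (-1) * g y)
          (fun y => 1 / (2 * c) * u y + 1 / (2 * c) * ut y + 1 * g y)
        + Eform D a b β (fun y => -(1 / (2 * c)) * u y + 1 / (2 * c) * ut y + 1 * g y)
          (fun y => -(1 / (2 * c)) * u y + 1 / (2 * c) * ut y + 1 * g y) = 1 / c := by
      unfold Eform
      beta_reduce
      rw [← integral_add I1 I2]
      rw [setIntegral_congr_fun hD.measurableSet hpt]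
      have hs : ∫ x in D, (1 / (2 * c ^ 2) * (u x * ξ x)
            + 1 / (2 * c ^ 2) * (ut x * (β * ut x - Lop a b ut x))
            + 1 / c * (ut x * (β * g x - Lop a b g x))
            - 1 / c * (g x * ξ x))
          = (∫ x in D, (1 / (2 * c ^ 2) * (u x * ξ x)
              + 1 / (2 * c ^ 2) * (ut x * (β * ut x - Lop a b ut x))
              + 1 / c * (ut x * (β * g x - Lop a b g x))))
            - ∫ x in D, 1 / c * (g x * ξ x) :=
        integral_sub (((Ju.const_mul _).add (Jut.const_mul _)).add (Jug.const_mul _))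
          (Jgξ.const_mul _)
      have hs2 : ∫ x in D, (1 / (2 * c ^ 2) * (u x * ξ x)
            + 1 / (2 * c ^ 2) * (ut x * (β * ut x - Lop a b ut x))
            + 1 / c * (ut x * (β * g x - Lop a b g x)))
          = (∫ x in D, (1 / (2 * c ^ 2) * (u x * ξ x)
              + 1 / (2 * c ^ 2) * (ut x * (β * ut x - Lop a b ut x))))
            + ∫ x in D, 1 / c * (ut x * (β * g x - Lop a b g x)) :=
        integral_add ((Ju.const_mul _).add (Jut.const_mul _)) (Jug.const_mul _)
      have hs3 : ∫ x in D, (1 / (2 * c ^ 2) * (u x * ξ x)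
            + 1 / (2 * c ^ 2) * (ut x * (β * ut x - Lop a b ut x)))
          = (∫ x in D, 1 / (2 * c ^ 2) * (u x * ξ x))
            + ∫ x in D, 1 / (2 * c ^ 2) * (ut x * (β * ut x - Lop a b ut x)) :=
        integral_add (Ju.const_mul _) (Jut.const_mul _)
      have hv1 : ∫ x in D, 1 / (2 * c ^ 2) * (u x * ξ x) = 1 / (2 * c ^ 2) * c := by
        rw [integral_const_mul, ← hc]
      have hv2 : ∫ x in D, 1 / (2 * c ^ 2) * (ut x * (β * ut x - Lop a b ut x))
          = 1 / (2 * c ^ 2) * c := by rw [integral_const_mul, hutKut]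
      have hv3 : ∫ x in D, 1 / c * (ut x * (β * g x - Lop a b g x)) = 0 := by
        rw [integral_const_mul, hutKg, mul_zero]
      have hv4 : ∫ x in D, 1 / c * (g x * ξ x) = 0 := by
        rw [integral_const_mul, hgξ, mul_zero]
      rw [hs, hs2, hs3, hv1, hv2, hv3, hv4]
      field_simp
      ring
    rw [e0, e1, e2]
    linarith [key]
  refine ⟨main, ?_⟩
  intro hpos g hgM
  have h1 := main g hgM
  -- g − ŵ belongs to M₀
  have hmem : MemM D ξ 0 (g - what) := by
    obtain ⟨⟨Ug, hUg, hcg, hCg⟩, hg0, hgξ⟩ := hgM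
    set W : Set (Fin d → ℝ) := V ∩ Ug with hWdef
    have hW : IsOpen W := hV.inter hUg
    have hcW : closure D ⊆ W := Set.subset_inter hcV hcg
    have Cu' : ContDiffOn ℝ 2 u W := Cu.mono Set.inter_subset_left
    have Ct' : ContDiffOn ℝ 2 ut W := Ct.mono Set.inter_subset_left
    have Cg' : ContDiffOn ℝ 2 g W := hCg.mono Set.inter_subset_right
    have Cξ' : ContinuousOn ξ W := Cξ.mono Set.inter_subset_left
    have e2 : g - what = fun y => -(1 / (2 * c)) * u y + 1 / (2 * c) * ut y + 1 * g y := by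
      funext y
      have := hwhat y
      simp only [Pi.sub_apply, this]
      field_simp; ring
    refine ⟨⟨W, hW, hcW, ?_⟩, ?_, ?_⟩
    · rw [e2]
      exact ((contDiffOn_const.mul Cu').add (contDiffOn_const.mul Ct')).add
        (contDiffOn_const.mul Cg')
    · intro x hx
      simp only [Pi.sub_apply, hwhat x, hu0 x hx, hut0 x hx, hg0 x hx]
      ring
    · have Ju : IntegrableOn (fun x => u x * ξ x) D :=
        integrableOn_of_contOn hDb hcW (Cu'.continuousOn.mul Cξ')
      have Jut : IntegrableOn (fun x => ut x * ξ x) D :=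
        integrableOn_of_contOn hDb hcW (Ct'.continuousOn.mul Cξ')
      have Jg : IntegrableOn (fun x => g x * ξ x) D :=
        integrableOn_of_contOn hDb hcW (Cg'.continuousOn.mul Cξ')
      have hsplit : ∀ x ∈ D, (g - what) x * ξ x
          = 1 * (g x * ξ x) + (-(1 / (2 * c))) * (u x * ξ x) + (1 / (2 * c)) * (ut x * ξ x) := by
        intro x hx
        simp only [Pi.sub_apply, hwhat x]
        field_simp; ring
      rw [setIntegral_congr_fun hD.measurableSet hsplit]
      have ks : ∫ x in D, (1 * (g x * ξ x) + -(1 / (2 * c)) * (u x * ξ x)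
            + 1 / (2 * c) * (ut x * ξ x))
          = (∫ x in D, (1 * (g x * ξ x) + -(1 / (2 * c)) * (u x * ξ x)))
            + ∫ x in D, 1 / (2 * c) * (ut x * ξ x) :=
        integral_add ((Jg.const_mul _).add (Ju.const_mul _)) (Jut.const_mul _)
      have ks2 : ∫ x in D, (1 * (g x * ξ x) + -(1 / (2 * c)) * (u x * ξ x))
          = (∫ x in D, 1 * (g x * ξ x)) + ∫ x in D, -(1 / (2 * c)) * (u x * ξ x) :=
        integral_add (Jg.const_mul _) (Ju.const_mul _)
      have kv1 : ∫ x in D, 1 * (g x * ξ x) = 0 := by rw [integral_const_mul, hgξ, mul_zero]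
      have kv2 : ∫ x in D, -(1 / (2 * c)) * (u x * ξ x) = -(1 / (2 * c)) * c := by
        rw [integral_const_mul, ← hc]
      have kv3 : ∫ x in D, 1 / (2 * c) * (ut x * ξ x) = 1 / (2 * c) * c := by
        rw [integral_const_mul, hutξ]
      rw [ks, ks2, kv1, kv2, kv3]
      ring
  have h2 := hpos (g - what) hmem
  linarith
end
end

section
/- (Theorem 4.1(1), analytic form.) Let D ⊆ ℝ^d be a bounded open set with the divergence property, let a have C¹ entries with a symmetric, let b have C¹ components with div(b) = 0 on an open neighborhood of the closure of D, and let γ ∈ ℝ and β ≥ 0. Suppose u₊ and u₋ are C² on an open neighborhood of the closure of D, vanish on ∂D, and satisfy (β − ∇·a∇ − γ b·∇)u₊ = 1 and (β − ∇·a∇ + γ b·∇)u₋ = 1 at every point of D. Then ∫_D u₊ dx = ∫_D u₋ dx. (Probabilistically: the integrated Laplace transforms of the exit times from D of the diffusions generated by L_{(γ)} and L_{(−γ)} coincide; for β = 0 this says ∫_D E_x τ_D^{(γ)} dx = ∫_D E_x τ_D^{(−γ)} dx.) -/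
open MeasureTheory

noncomputable section

/-- If `f` is C² on an open set, its partial derivatives are C¹ there. -/
lemma pd_C1' {d : ℕ} {U : Set (Fin d → ℝ)} (hU : IsOpen U) {f : (Fin d → ℝ) → ℝ}
    (hf : ContDiffOn ℝ 2 f U) (j : Fin d) : ContDiffOn ℝ 1 (pd f j) U :=
  (hf.fderiv_of_isOpen hU (by norm_num)).clm_apply contDiffOn_const

/-- Theorem 4.1(1), analytic form: the solutions of `(β − ∇·a∇ − γb·∇)u₊ = 1`
and `(β − ∇·a∇ + γb·∇)u₋ = 1` with zero boundary values have the same integral over `D`. -/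
theorem stmt15 {d : ℕ} (D : Set (Fin d → ℝ)) (hD : IsOpen D)
    (hDb : Bornology.IsBounded D) (hdiv : DivProp D)
    (a : (Fin d → ℝ) → Matrix (Fin d) (Fin d) ℝ)
    (ha : ∀ i j, ContDiff ℝ 1 (fun x => a x i j))
    (hsym : ∀ x i j, a x i j = a x j i)
    (b : (Fin d → ℝ) → (Fin d → ℝ)) (hb : ∀ i, ContDiff ℝ 1 (fun x => b x i))
    (hdivb : ∃ U : Set (Fin d → ℝ), IsOpen U ∧ closure D ⊆ U ∧ ∀ x ∈ U, divg b x = 0)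
    (γ β : ℝ) (hβ : 0 ≤ β)
    (up um : (Fin d → ℝ) → ℝ)
    (hup : C2Near D up) (hup0 : ∀ x ∈ frontier D, up x = 0)
    (hupeq : ∀ x ∈ D,
      β * up x - (divg (aGrad a up) x + γ * ∑ i, b x i * pd up i x) = 1)
    (hum : C2Near D um) (hum0 : ∀ x ∈ frontier D, um x = 0)
    (humeq : ∀ x ∈ D,
      β * um x - (divg (aGrad a um) x - γ * ∑ i, b x i * pd um i x) = 1) :
    (∫ x in D, up x) = ∫ x in D, um x := by
  classical
  obtain ⟨U1, hU1o, hU1c, hup2⟩ := hup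
  obtain ⟨U2, hU2o, hU2c, hum2⟩ := hum
  obtain ⟨U3, hU3o, hU3c, hdivb0⟩ := hdivb
  set U : Set (Fin d → ℝ) := U1 ∩ U2 ∩ U3 with hUdef
  have hUo : IsOpen U := (hU1o.inter hU2o).inter hU3o
  have hUc : closure D ⊆ U := fun x hx => ⟨⟨hU1c hx, hU2c hx⟩, hU3c hx⟩
  have hpdup : ∀ j, ContDiffOn ℝ 1 (pd up j) U := fun j =>
    (pd_C1' hU1o hup2 j).mono (fun x hx => hx.1.1)
  have hpdum : ∀ j, ContDiffOn ℝ 1 (pd um j) U := fun j =>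
    (pd_C1' hU2o hum2 j).mono (fun x hx => hx.1.2)
  have hupC1 : ContDiffOn ℝ 1 up U := (hup2.of_le (by norm_num)).mono (fun x hx => hx.1.1)
  have humC1 : ContDiffOn ℝ 1 um U := (hum2.of_le (by norm_num)).mono (fun x hx => hx.1.2)
  have hGp : ∀ i, ContDiffOn ℝ 1 (fun x => aGrad a up x i) U := fun i =>
    ContDiffOn.sum (fun j _ => ((ha i j).contDiffOn).mul (hpdup j))
  have hGm : ∀ i, ContDiffOn ℝ 1 (fun x => aGrad a um x i) U := fun i =>
    ContDiffOn.sum (fun j _ => ((ha i j).contDiffOn).mul (hpdum j))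
  set F : (Fin d → ℝ) → (Fin d → ℝ) := fun x i =>
    um x * aGrad a up x i - up x * aGrad a um x i + γ * (um x * up x) * b x i with hFdef
  have hFC1 : C1NearVF D F := by
    refine ⟨U, hUo, hUc, fun i => ?_⟩
    simp only [hFdef]
    exact ((humC1.mul (hGp i)).sub (hupC1.mul (hGm i))).add
      ((contDiffOn_const.mul (humC1.mul hupC1)).mul ((hb i).contDiffOn))
  have hF0 : ∀ x ∈ frontier D, F x = 0 := by
    intro x hx
    funext i
    simp [hFdef, hup0 x hx, hum0 x hx]
  have key : ∀ x ∈ D, divg F x = up x - um x := by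
    intro x hxD
    have hxU : x ∈ U := hUc (subset_closure hxD)
    have hx3 : x ∈ U3 := hxU.2
    have hnhds : U ∈ nhds x := hUo.mem_nhds hxU
    have hdum : DifferentiableAt ℝ um x :=
      (humC1.differentiableOn one_ne_zero).differentiableAt hnhds
    have hdup : DifferentiableAt ℝ up x :=
      (hupC1.differentiableOn one_ne_zero).differentiableAt hnhds
    have hdGp : ∀ i, DifferentiableAt ℝ (fun y => aGrad a up y i) x := fun i =>
      ((hGp i).differentiableOn one_ne_zero).differentiableAt hnhds
    have hdGm : ∀ i, DifferentiableAt ℝ (fun y => aGrad a um y i) x := fun i =>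
      ((hGm i).differentiableOn one_ne_zero).differentiableAt hnhds
    have hdb : ∀ i, DifferentiableAt ℝ (fun y => b y i) x := fun i =>
      ((hb i).differentiable one_ne_zero).differentiableAt
    have comp : ∀ i : Fin d, fderiv ℝ (fun y => F y i) x (Pi.single i 1) =
        (pd um i x * aGrad a up x i
            + um x * fderiv ℝ (fun y => aGrad a up y i) x (Pi.single i 1))
          - (pd up i x * aGrad a um x i
            + up x * fderiv ℝ (fun y => aGrad a um y i) x (Pi.single i 1))
          + γ * ((pd um i x * up x + um x * pd up i x) * b x i
            + um x * up x * fderiv ℝ (fun y => b y i) x (Pi.single i 1)) := by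
      intro i
      have h1 : HasFDerivAt (fun y => um y * aGrad a up y i)
          (um x • fderiv ℝ (fun y => aGrad a up y i) x + aGrad a up x i • fderiv ℝ um x) x :=
        hdum.hasFDerivAt.mul (hdGp i).hasFDerivAt
      have h2 : HasFDerivAt (fun y => up y * aGrad a um y i)
          (up x • fderiv ℝ (fun y => aGrad a um y i) x + aGrad a um x i • fderiv ℝ up x) x :=
        hdup.hasFDerivAt.mul (hdGm i).hasFDerivAt
      have hmu : HasFDerivAt (fun y => um y * up y)
          (um x • fderiv ℝ up x + up x • fderiv ℝ um x) x :=
        hdum.hasFDerivAt.mul hdup.hasFDerivAt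
      have hc : HasFDerivAt (fun y => γ * (um y * up y))
          (γ • (um x • fderiv ℝ up x + up x • fderiv ℝ um x)) x := hmu.const_mul γ
      have h3 : HasFDerivAt (fun y => γ * (um y * up y) * b y i)
          ((γ * (um x * up x)) • fderiv ℝ (fun y => b y i) x
            + b x i • (γ • (um x • fderiv ℝ up x + up x • fderiv ℝ um x))) x :=
        hc.mul (hdb i).hasFDerivAt
      have hFi : HasFDerivAt (fun y => F y i)
          (((um x • fderiv ℝ (fun y => aGrad a up y i) x + aGrad a up x i • fderiv ℝ um x)
            - (up x • fderiv ℝ (fun y => aGrad a um y i) x + aGrad a um x i • fderiv ℝ up x))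
            + ((γ * (um x * up x)) • fderiv ℝ (fun y => b y i) x
              + b x i • (γ • (um x • fderiv ℝ up x + up x • fderiv ℝ um x)))) x := by
        simp only [hFdef]
        exact (h1.sub h2).add h3
      rw [hFi.fderiv]
      simp only [pd, ContinuousLinearMap.add_apply, ContinuousLinearMap.sub_apply,
        ContinuousLinearMap.smul_apply, smul_eq_mul]
      ring
    have expand : ∀ f g h k l m : Fin d → ℝ,
        (∑ i, (f i + g i - (h i + k i) + γ * (l i + m i)))
          = (∑ i, f i) + (∑ i, g i) - ((∑ i, h i) + (∑ i, k i))
            + γ * ((∑ i, l i) + (∑ i, m i)) := by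
      intro f g h k l m
      simp only [mul_add, Finset.sum_add_distrib, Finset.sum_sub_distrib, Finset.mul_sum]
    have h0 : divg F x =
        (∑ i, pd um i x * aGrad a up x i)
          + (∑ i, um x * fderiv ℝ (fun y => aGrad a up y i) x (Pi.single i 1))
          - ((∑ i, pd up i x * aGrad a um x i)
            + (∑ i, up x * fderiv ℝ (fun y => aGrad a um y i) x (Pi.single i 1)))
          + γ * ((∑ i, (pd um i x * up x + um x * pd up i x) * b x i)
            + (∑ i, um x * up x * fderiv ℝ (fun y => b y i) x (Pi.single i 1))) := by
      rw [divg, Finset.sum_congr rfl (fun i _ => comp i)]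
      exact expand _ _ _ _ _ _
    have e2 : (∑ i, um x * fderiv ℝ (fun y => aGrad a up y i) x (Pi.single i 1))
        = um x * divg (aGrad a up) x := by rw [divg, Finset.mul_sum]
    have e4 : (∑ i, up x * fderiv ℝ (fun y => aGrad a um y i) x (Pi.single i 1))
        = up x * divg (aGrad a um) x := by rw [divg, Finset.mul_sum]
    have e5 : (∑ i, (pd um i x * up x + um x * pd up i x) * b x i)
        = up x * (∑ i, b x i * pd um i x) + um x * (∑ i, b x i * pd up i x) := by
      rw [Finset.mul_sum, Finset.mul_sum, ← Finset.sum_add_distrib]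
      exact Finset.sum_congr rfl fun i _ => by ring
    have e6 : (∑ i, um x * up x * fderiv ℝ (fun y => b y i) x (Pi.single i 1))
        = um x * up x * divg b x := by rw [divg, Finset.mul_sum]
    have hQ : (∑ i, pd um i x * aGrad a up x i) = ∑ i, pd up i x * aGrad a um x i := by
      simp only [aGrad, Finset.mul_sum]
      rw [Finset.sum_comm]
      refine Finset.sum_congr rfl fun i _ => Finset.sum_congr rfl fun j _ => ?_
      rw [hsym x j i]; ring
    have hdivb0x : divg b x = 0 := hdivb0 x hx3
    have hup' : divg (aGrad a up) x + γ * (∑ i, b x i * pd up i x) = β * up x - 1 := by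
      linarith [hupeq x hxD]
    have hum' : divg (aGrad a um) x - γ * (∑ i, b x i * pd um i x) = β * um x - 1 := by
      linarith [humeq x hxD]
    rw [h0, e2, e4, e5, e6, hQ, hdivb0x]
    linear_combination um x * hup' - up x * hum'
  have hIp : IntegrableOn up D := by
    have h1 : IsCompact (closure D) := hDb.isCompact_closure
    have h2 : ContinuousOn up (closure D) := (hup2.continuousOn).mono hU1c
    exact (h2.integrableOn_compact h1).mono_set subset_closure
  have hIm : IntegrableOn um D := by
    have h1 : IsCompact (closure D) := hDb.isCompact_closure
    have h2 : ContinuousOn um (closure D) := (hum2.continuousOn).mono hU2c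
    exact (h2.integrableOn_compact h1).mono_set subset_closure
  have hint : ∫ x in D, divg F x = 0 := hdiv F hFC1 hF0
  have h2 : ∫ x in D, (up x - um x) = 0 := by
    rw [← hint]
    exact setIntegral_congr_fun hD.measurableSet fun x hx => (key x hx).symm
  rw [integral_sub hIp hIm] at h2
  linarith
end
end

section
/- (Theorem 4.1(2), core monotonicity in the drift parameter.) Let D ⊆ ℝ^d be open, let a have C¹ entries with a symmetric, let b have C¹ components with div(b) = 0 on D, and let β ∈ ℝ. Let N₀₀ be the set of C² functions g with compact support contained in D and ∫_D g dx = 0, and for γ ∈ ℝ set ℰ^{(γ)}_β(f,g) = ∫_D f(x)((β − L_{(γ)})g)(x) dx with L_{(γ)} = ∇·a∇ + γ b·∇. Then for every C² function f with compact support in D and every 0 ≤ γ₁ ≤ γ₂: sup over g ∈ N₀₀ of ℰ^{(γ₁)}_β(f−g, f+g) ≤ sup over g ∈ N₀₀ of ℰ^{(γ₂)}_β(f−g, f+g), the suprema taken in the extended reals. (Indeed, for every g ∈ N₀₀ there exists g' ∈ N₀₀, namely g' = g or g' = −g, with ℰ^{(γ₁)}_β(f−g, f+g) ≤ ℰ^{(γ₂)}_β(f−g',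 f+g').) -/
open MeasureTheory

noncomputable section

/-- The parametrized form `ℰ^{(γ)}_β(f,g) = ∫_D f ((β − L_{(γ)})g) dx` with
`L_{(γ)} g = ∇·(a∇g) + γ b·∇g`. -/
def EformGamma {d : ℕ} (D : Set (Fin d → ℝ)) (a : (Fin d → ℝ) → Matrix (Fin d) (Fin d) ℝ)
    (b : (Fin d → ℝ) → (Fin d → ℝ)) (β γ : ℝ) (f g : (Fin d → ℝ) → ℝ) : ℝ :=
  ∫ x in D, f x * (β * g x - (divg (aGrad a g) x + γ * ∑ i, b x i * pd g i x))

/-- `N₀₀`: C² functions with compact support contained in `D` and zero integral. -/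
def MemN00 {d : ℕ} (D : Set (Fin d → ℝ)) (g : (Fin d → ℝ) → ℝ) : Prop :=
  ContDiff ℝ 2 g ∧ HasCompactSupport g ∧ tsupport g ⊆ D ∧ (∫ x in D, g x) = 0

section IBPHelpers

variable {d : ℕ}

lemma integral_fderiv_apply_eq_zero {h : (Fin d → ℝ) → ℝ} (hh : ContDiff ℝ 1 h)
    (hc : HasCompactSupport h) (v : Fin d → ℝ) :
    ∫ x, fderiv ℝ h x v = 0 := by
  obtain ⟨C, hC⟩ := hh.lipschitzWith_of_hasCompactSupport hc one_ne_zero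
  have key := LipschitzWith.integral_lineDeriv_mul_eq (μ := volume)
    (f := fun _ : (Fin d → ℝ) => (1:ℝ)) (g := h)
    (LipschitzWith.const' (1:ℝ) (K := 0)) hC hc (-v)
  have hconst : ∀ (x w : Fin d → ℝ), lineDeriv ℝ (fun _ : (Fin d → ℝ) => (1:ℝ)) x w = 0 := by
    intro x w
    rw [(differentiableAt_const (1:ℝ)).lineDeriv_eq_fderiv, fderiv_fun_const]
    simp
  simp only [hconst, zero_mul, integral_zero, mul_one, neg_neg] at key
  have heq : ∀ x, lineDeriv ℝ h x v = fderiv ℝ h x v := fun x =>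
    ((hh.differentiable one_ne_zero) x).lineDeriv_eq_fderiv
  simp only [heq] at key
  exact key.symm

lemma pd_eq_zero_of_nmem {u : (Fin d → ℝ) → ℝ} {x : Fin d → ℝ}
    (hx : x ∉ tsupport u) (i : Fin d) : pd u i x = 0 := by
  have hx' : x ∉ Function.support (fderiv ℝ u) := fun h => hx (support_fderiv_subset ℝ h)
  unfold pd
  rw [Function.notMem_support.mp hx']
  rfl

lemma integral_divg_eq_zero {F : (Fin d → ℝ) → (Fin d → ℝ)}
    (hF : ∀ i, ContDiff ℝ 1 fun x => F x i) (hc : ∀ i, HasCompactSupport fun x => F x i) :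
    ∫ x, divg F x = 0 := by
  unfold divg
  rw [integral_finset_sum]
  · exact Finset.sum_eq_zero fun i _ => integral_fderiv_apply_eq_zero (hF i) (hc i) _
  · intro i _
    exact (((hF i).fderiv_right (m := 0) le_rfl).clm_apply contDiff_const).continuous.integrable_of_hasCompactSupport
      ((hc i).fderiv_apply ℝ _)

lemma contDiff_pd {u : (Fin d → ℝ) → ℝ} (hu : ContDiff ℝ 2 u) (i : Fin d) :
    ContDiff ℝ 1 fun x => pd u i x :=
  (hu.fderiv_right (m := 1) (by norm_num)).clm_apply contDiff_const

lemma continuous_pd {u : (Fin d → ℝ) → ℝ} (hu : ContDiff ℝ 1 u) (i : Fin d) :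
    Continuous fun x => pd u i x :=
  ((hu.fderiv_right (m := 0) le_rfl).clm_apply contDiff_const).continuous

lemma hcs_pd {u : (Fin d → ℝ) → ℝ} (hc : HasCompactSupport u) (i : Fin d) :
    HasCompactSupport fun x => pd u i x :=
  hc.fderiv_apply ℝ _

lemma pd_mul {u v : (Fin d → ℝ) → ℝ} (hu : Differentiable ℝ u) (hv : Differentiable ℝ v)
    (i : Fin d) (x : Fin d → ℝ) :
    pd (fun y => u y * v y) i x = pd u i x * v x + u x * pd v i x := by
  unfold pd
  rw [fderiv_fun_mul (hu x) (hv x)]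
  simp only [ContinuousLinearMap.add_apply, ContinuousLinearMap.smul_apply, smul_eq_mul]
  ring

variable {D : Set (Fin d → ℝ)}

lemma hcs_of_tsupport {u w : (Fin d → ℝ) → ℝ} (hcu : HasCompactSupport u)
    (hw : ∀ x, x ∉ tsupport u → w x = 0) : HasCompactSupport w :=
  hcu.mono' fun x hx => by
    by_contra hxx
    exact Function.mem_support.mp hx (hw x hxx)

lemma contDiff_aGrad {a : (Fin d → ℝ) → Matrix (Fin d) (Fin d) ℝ}
    (ha : ∀ i j, ContDiff ℝ 1 fun x => a x i j) {v : (Fin d → ℝ) → ℝ}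
    (hv : ContDiff ℝ 2 v) (i : Fin d) : ContDiff ℝ 1 fun x => aGrad a v x i := by
  show ContDiff ℝ 1 fun x => ∑ j, a x i j * pd v j x
  exact ContDiff.sum fun j _ => (ha i j).mul (contDiff_pd hv j)

lemma continuous_divg_aGrad {a : (Fin d → ℝ) → Matrix (Fin d) (Fin d) ℝ}
    (ha : ∀ i j, ContDiff ℝ 1 fun x => a x i j) {v : (Fin d → ℝ) → ℝ}
    (hv : ContDiff ℝ 2 v) : Continuous fun x => divg (aGrad a v) x := by
  unfold divg
  exact continuous_finset_sum _ fun i _ =>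
    (((contDiff_aGrad ha hv i).fderiv_right (m := 0) le_rfl).clm_apply contDiff_const).continuous

/-- Integration by parts for the drift term. -/
lemma ibp_b {b : (Fin d → ℝ) → (Fin d → ℝ)} (hb : ∀ i, ContDiff ℝ 1 fun x => b x i)
    (hdivb : ∀ x ∈ D, divg b x = 0)
    {u v : (Fin d → ℝ) → ℝ} (hu : ContDiff ℝ 2 u) (hv : ContDiff ℝ 2 v)
    (hcu : HasCompactSupport u) (hcv : HasCompactSupport v)
    (hsu : tsupport u ⊆ D) :
    (∫ x, u x * ∑ i, b x i * pd v i x) + (∫ x, v x * ∑ i, b x i * pd u i x) = 0 := by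
  have hu1 : ContDiff ℝ 1 u := hu.of_le one_le_two
  have hv1 : ContDiff ℝ 1 v := hv.of_le one_le_two
  have huv : ContDiff ℝ 1 fun y => u y * v y := hu1.mul hv1
  have hFc : ∀ i, ContDiff ℝ 1 fun x => b x i * (u x * v x) := fun i => (hb i).mul huv
  have hFs : ∀ i, HasCompactSupport fun x => b x i * (u x * v x) := fun i =>
    hcs_of_tsupport hcu fun x hx => by
      rw [image_eq_zero_of_notMem_tsupport hx, zero_mul, mul_zero]
  have hdiv0 := integral_divg_eq_zero (F := fun y i => b y i * (u y * v y)) hFc hFs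
  have hpt : ∀ x, divg (fun y i => b y i * (u y * v y)) x
      = divg b x * (u x * v x)
        + (u x * ∑ i, b x i * pd v i x + v x * ∑ i, b x i * pd u i x) := by
    intro x
    have hterm : ∀ i : Fin d, fderiv ℝ (fun y => b y i * (u y * v y)) x (Pi.single i 1)
        = fderiv ℝ (fun y => b y i) x (Pi.single i 1) * (u x * v x)
          + b x i * (pd u i x * v x + u x * pd v i x) := by
      intro i
      have h1 : pd (fun y => b y i * (u y * v y)) i x
          = pd (fun y => b y i) i x * (u x * v x) + b x i * pd (fun y => u y * v y) i x :=
        pd_mul ((hb i).differentiable one_ne_zero) (huv.differentiable one_ne_zero) i x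
      have h2 := pd_mul (hu1.differentiable one_ne_zero) (hv1.differentiable one_ne_zero) i x
      show pd (fun y => b y i * (u y * v y)) i x = _
      rw [h1, h2]; rfl
    show (∑ i, fderiv ℝ (fun y => b y i * (u y * v y)) x (Pi.single i 1)) = _
    simp only [hterm]
    show _ = (∑ i, fderiv ℝ (fun y => b y i) x (Pi.single i 1)) * (u x * v x) + _
    rw [Finset.sum_add_distrib, ← Finset.sum_mul, Finset.mul_sum, Finset.mul_sum,
      ← Finset.sum_add_distrib]
    congr 1
    exact Finset.sum_congr rfl fun i _ => by ring
  have hzero : ∀ x, divg b x * (u x * v x) = 0 := by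
    intro x
    by_cases hx : x ∈ D
    · rw [hdivb x hx, zero_mul]
    · rw [image_eq_zero_of_notMem_tsupport (fun h => hx (hsu h)), zero_mul, mul_zero]
  have hpt' : (fun x => divg (fun y i => b y i * (u y * v y)) x)
      = fun x => u x * (∑ i, b x i * pd v i x) + v x * (∑ i, b x i * pd u i x) :=
    funext fun x => by rw [hpt x, hzero x, zero_add]
  rw [hpt'] at hdiv0
  have hSv : Continuous fun x => ∑ i, b x i * pd v i x :=
    continuous_finset_sum _ fun i _ => (hb i).continuous.mul (continuous_pd hv1 i)
  have hSu : Continuous fun x => ∑ i, b x i * pd u i x :=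
    continuous_finset_sum _ fun i _ => (hb i).continuous.mul (continuous_pd hu1 i)
  have intA : Integrable (fun x => u x * ∑ i, b x i * pd v i x) volume :=
    (hu1.continuous.mul hSv).integrable_of_hasCompactSupport
      (hcs_of_tsupport hcu fun x hx => by simp only [Pi.mul_apply, image_eq_zero_of_notMem_tsupport hx, zero_mul])
  have intB : Integrable (fun x => v x * ∑ i, b x i * pd u i x) volume :=
    (hv1.continuous.mul hSu).integrable_of_hasCompactSupport
      (hcs_of_tsupport hcv fun x hx => by simp only [Pi.mul_apply, image_eq_zero_of_notMem_tsupport hx, zero_mul])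
  rw [integral_add intA intB] at hdiv0
  exact hdiv0

lemma ibp_a_half {a : (Fin d → ℝ) → Matrix (Fin d) (Fin d) ℝ}
    (ha : ∀ i j, ContDiff ℝ 1 fun x => a x i j)
    {u v : (Fin d → ℝ) → ℝ} (hu : ContDiff ℝ 2 u) (hv : ContDiff ℝ 2 v)
    (hcu : HasCompactSupport u) :
    (∫ x, u x * divg (aGrad a v) x) + (∫ x, ∑ i, pd u i x * aGrad a v x i) = 0 := by
  have hu1 : ContDiff ℝ 1 u := hu.of_le one_le_two
  have hFc : ∀ i, ContDiff ℝ 1 fun x => u x * aGrad a v x i := fun i =>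
    hu1.mul (contDiff_aGrad ha hv i)
  have hFs : ∀ i, HasCompactSupport fun x => u x * aGrad a v x i := fun i =>
    hcs_of_tsupport hcu fun x hx => by rw [image_eq_zero_of_notMem_tsupport hx, zero_mul]
  have hdiv0 := integral_divg_eq_zero (F := fun y i => u y * aGrad a v y i) hFc hFs
  have hpt : ∀ x, divg (fun y i => u y * aGrad a v y i) x
      = u x * divg (aGrad a v) x + ∑ i, pd u i x * aGrad a v x i := by
    intro x
    have hterm : ∀ i : Fin d, fderiv ℝ (fun y => u y * aGrad a v y i) x (Pi.single i 1)
        = pd u i x * aGrad a v x i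
          + u x * fderiv ℝ (fun y => aGrad a v y i) x (Pi.single i 1) := by
      intro i
      have h1 : pd (fun y => u y * aGrad a v y i) i x
          = pd u i x * aGrad a v x i + u x * pd (fun y => aGrad a v y i) i x :=
        pd_mul (hu1.differentiable one_ne_zero) ((contDiff_aGrad ha hv i).differentiable one_ne_zero) i x
      show pd (fun y => u y * aGrad a v y i) i x = _
      rw [h1]; rfl
    show (∑ i, fderiv ℝ (fun y => u y * aGrad a v y i) x (Pi.single i 1)) = _
    simp only [hterm]
    rw [Finset.sum_add_distrib, add_comm]
    congr 1
    show _ = u x * ∑ i, fderiv ℝ (fun y => aGrad a v y i) x (Pi.single i 1)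
    rw [Finset.mul_sum]
  have hpt' : (fun x => divg (fun y i => u y * aGrad a v y i) x)
      = fun x => u x * divg (aGrad a v) x + ∑ i, pd u i x * aGrad a v x i :=
    funext fun x => hpt x
  rw [hpt'] at hdiv0
  have intA : Integrable (fun x => u x * divg (aGrad a v) x) volume :=
    (hu1.continuous.mul (continuous_divg_aGrad ha hv)).integrable_of_hasCompactSupport
      (hcs_of_tsupport hcu fun x hx => by simp only [Pi.mul_apply, image_eq_zero_of_notMem_tsupport hx, zero_mul])
  have intB : Integrable (fun x => ∑ i, pd u i x * aGrad a v x i) volume := by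
    refine (continuous_finset_sum _ fun i _ =>
      (continuous_pd hu1 i).mul (contDiff_aGrad ha hv i).continuous).integrable_of_hasCompactSupport
      (hcs_of_tsupport hcu fun x hx => ?_)
    simp only [Finset.sum_apply, Pi.mul_apply, pd_eq_zero_of_nmem hx, zero_mul, Finset.sum_const_zero]
  rw [integral_add intA intB] at hdiv0
  exact hdiv0

/-- Symmetry of the second-order form. -/
lemma ibp_a {a : (Fin d → ℝ) → Matrix (Fin d) (Fin d) ℝ}
    (ha : ∀ i j, ContDiff ℝ 1 fun x => a x i j)
    (hsym : ∀ x i j, a x i j = a x j i)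
    {u v : (Fin d → ℝ) → ℝ} (hu : ContDiff ℝ 2 u) (hv : ContDiff ℝ 2 v)
    (hcu : HasCompactSupport u) (hcv : HasCompactSupport v) :
    ∫ x, u x * divg (aGrad a v) x = ∫ x, v x * divg (aGrad a u) x := by
  have h1 := ibp_a_half ha hu hv hcu
  have h2 := ibp_a_half ha hv hu hcv
  have hQ : (fun x => ∑ i, pd u i x * aGrad a v x i)
      = fun x => ∑ i, pd v i x * aGrad a u x i := by
    funext x
    show (∑ i, pd u i x * ∑ j, a x i j * pd v j x) = ∑ i, pd v i x * ∑ j, a x i j * pd u j x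
    simp only [Finset.mul_sum]
    rw [Finset.sum_comm]
    exact Finset.sum_congr rfl fun i _ => Finset.sum_congr rfl fun j _ => by
      rw [hsym x j i]; ring
  rw [hQ] at h1
  linarith

end IBPHelpers


section Decomp

variable {d : ℕ} {D : Set (Fin d → ℝ)} {a : (Fin d → ℝ) → Matrix (Fin d) (Fin d) ℝ}
  {b : (Fin d → ℝ) → (Fin d → ℝ)} {β γ : ℝ}

lemma EformGamma_decomp (ha : ∀ i j, ContDiff ℝ 1 fun x => a x i j)
    (hb : ∀ i, ContDiff ℝ 1 fun x => b x i)
    {u v : (Fin d → ℝ) → ℝ} (hu : ContDiff ℝ 2 u) (hv : ContDiff ℝ 2 v)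
    (hcu : HasCompactSupport u) (hsu : tsupport u ⊆ D) :
    EformGamma D a b β γ u v
      = (∫ x, u x * (β * v x - divg (aGrad a v) x))
        - γ * ∫ x, u x * ∑ i, b x i * pd v i x := by
  have hu1 : ContDiff ℝ 1 u := hu.of_le one_le_two
  have hv1 : ContDiff ℝ 1 v := hv.of_le one_le_two
  have hTv : Continuous fun x => divg (aGrad a v) x := continuous_divg_aGrad ha hv
  have hSv : Continuous fun x => ∑ i, b x i * pd v i x :=
    continuous_finset_sum _ fun i _ => (hb i).continuous.mul (continuous_pd hv1 i)
  have intA : Integrable (fun x => u x * (β * v x - divg (aGrad a v) x)) volume :=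
    (hu1.continuous.mul ((continuous_const.mul hv1.continuous).sub hTv)).integrable_of_hasCompactSupport
      (hcs_of_tsupport hcu fun x hx => by simp only [Pi.mul_apply, image_eq_zero_of_notMem_tsupport hx, zero_mul])
  have intB : Integrable (fun x => u x * ∑ i, b x i * pd v i x) volume :=
    (hu1.continuous.mul hSv).integrable_of_hasCompactSupport
      (hcs_of_tsupport hcu fun x hx => by simp only [Pi.mul_apply, image_eq_zero_of_notMem_tsupport hx, zero_mul])
  unfold EformGamma
  rw [setIntegral_eq_integral_of_forall_compl_eq_zero
    (fun x hx => by rw [image_eq_zero_of_notMem_tsupport (fun h => hx (hsu h)), zero_mul])]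
  have hptw : (fun x => u x * (β * v x - (divg (aGrad a v) x + γ * ∑ i, b x i * pd v i x)))
      = fun x => u x * (β * v x - divg (aGrad a v) x)
          - γ * (u x * ∑ i, b x i * pd v i x) := funext fun x => by ring
  rw [hptw, integral_sub intA (intB.const_mul γ), MeasureTheory.integral_const_mul]

lemma A_symm (ha : ∀ i j, ContDiff ℝ 1 fun x => a x i j)
    (hsym : ∀ x i j, a x i j = a x j i)
    {u v : (Fin d → ℝ) → ℝ} (hu : ContDiff ℝ 2 u) (hv : ContDiff ℝ 2 v)
    (hcu : HasCompactSupport u) (hcv : HasCompactSupport v) :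
    (∫ x, u x * (β * v x - divg (aGrad a v) x))
      = ∫ x, v x * (β * u x - divg (aGrad a u) x) := by
  have hu1 : ContDiff ℝ 1 u := hu.of_le one_le_two
  have hv1 : ContDiff ℝ 1 v := hv.of_le one_le_two
  have intP : Integrable (fun x => β * (u x * v x)) volume :=
    ((continuous_const.mul (hu1.continuous.mul hv1.continuous))).integrable_of_hasCompactSupport
      (hcs_of_tsupport hcu fun x hx => by
        simp only [Pi.mul_apply, image_eq_zero_of_notMem_tsupport hx, zero_mul, mul_zero])
  have intTuv : Integrable (fun x => u x * divg (aGrad a v) x) volume :=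
    (hu1.continuous.mul (continuous_divg_aGrad ha hv)).integrable_of_hasCompactSupport
      (hcs_of_tsupport hcu fun x hx => by simp only [Pi.mul_apply, image_eq_zero_of_notMem_tsupport hx, zero_mul])
  have intTvu : Integrable (fun x => v x * divg (aGrad a u) x) volume :=
    (hv1.continuous.mul (continuous_divg_aGrad ha hu)).integrable_of_hasCompactSupport
      (hcs_of_tsupport hcv fun x hx => by simp only [Pi.mul_apply, image_eq_zero_of_notMem_tsupport hx, zero_mul])
  have e1 : (fun x => u x * (β * v x - divg (aGrad a v) x))
      = fun x => β * (u x * v x) - u x * divg (aGrad a v) x := funext fun x => by ring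
  have e2 : (fun x => v x * (β * u x - divg (aGrad a u) x))
      = fun x => β * (u x * v x) - v x * divg (aGrad a u) x := funext fun x => by ring
  rw [e1, e2, integral_sub intP intTuv, integral_sub intP intTvu,
    ibp_a ha hsym hu hv hcu hcv]

end Decomp

/-- Theorem 4.1(2), core monotonicity in the drift parameter. -/
theorem stmt16 {d : ℕ} (D : Set (Fin d → ℝ)) (hD : IsOpen D)
    (a : (Fin d → ℝ) → Matrix (Fin d) (Fin d) ℝ)
    (ha : ∀ i j, ContDiff ℝ 1 (fun x => a x i j))
    (hsym : ∀ x i j, a x i j = a x j i)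
    (b : (Fin d → ℝ) → (Fin d → ℝ)) (hb : ∀ i, ContDiff ℝ 1 (fun x => b x i))
    (hdivb : ∀ x ∈ D, divg b x = 0)
    (β : ℝ)
    (f : (Fin d → ℝ) → ℝ)
    (hf : ContDiff ℝ 2 f) (hfc : HasCompactSupport f) (hfD : tsupport f ⊆ D)
    (γ₁ γ₂ : ℝ) (hγ₁ : 0 ≤ γ₁) (hγ₁₂ : γ₁ ≤ γ₂) :
    (∀ g, MemN00 D g → ∃ g', MemN00 D g' ∧ (g' = g ∨ g' = -g) ∧
      EformGamma D a b β γ₁ (f - g) (f + g) ≤ EformGamma D a b β γ₂ (f - g') (f + g')) ∧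
    (⨆ g : {g : (Fin d → ℝ) → ℝ // MemN00 D g},
        ((EformGamma D a b β γ₁ (f - g.1) (f + g.1) : ℝ) : EReal))
      ≤ ⨆ g : {g : (Fin d → ℝ) → ℝ // MemN00 D g},
          ((EformGamma D a b β γ₂ (f - g.1) (f + g.1) : ℝ) : EReal) := by
  have main : ∀ g, MemN00 D g → ∃ g', MemN00 D g' ∧ (g' = g ∨ g' = -g) ∧
      EformGamma D a b β γ₁ (f - g) (f + g) ≤ EformGamma D a b β γ₂ (f - g') (f + g') := by
    intro g hg
    obtain ⟨hg2, hgc, hgD, hgi⟩ := hg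
    have hKc : IsCompact (tsupport f ∪ tsupport g) := hfc.union hgc
    have hKcl : IsClosed (tsupport f ∪ tsupport g) :=
      (isClosed_tsupport f).union (isClosed_tsupport g)
    have hKD : tsupport f ∪ tsupport g ⊆ D := Set.union_subset hfD hgD
    have hsupu : Function.support (f - g) ⊆ tsupport f ∪ tsupport g := by
      intro x hx
      by_contra h
      simp only [Set.mem_union, not_or] at h
      refine Function.mem_support.mp hx ?_
      show f x - g x = 0
      rw [image_eq_zero_of_notMem_tsupport h.1, image_eq_zero_of_notMem_tsupport h.2, sub_zero]
    have hsupv : Function.support (f + g) ⊆ tsupport f ∪ tsupport g := by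
      intro x hx
      by_contra h
      simp only [Set.mem_union, not_or] at h
      refine Function.mem_support.mp hx ?_
      show f x + g x = 0
      rw [image_eq_zero_of_notMem_tsupport h.1, image_eq_zero_of_notMem_tsupport h.2, add_zero]
    have hu : ContDiff ℝ 2 (f - g) := hf.sub hg2
    have hv : ContDiff ℝ 2 (f + g) := hf.add hg2
    have hcu : HasCompactSupport (f - g) :=
      HasCompactSupport.of_support_subset_isCompact hKc hsupu
    have hcv : HasCompactSupport (f + g) :=
      HasCompactSupport.of_support_subset_isCompact hKc hsupv
    have hsu : tsupport (f - g) ⊆ D := (closure_minimal hsupu hKcl).trans hKD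
    have hsv : tsupport (f + g) ⊆ D := (closure_minimal hsupv hKcl).trans hKD
    have hdec : ∀ γ, EformGamma D a b β γ (f - g) (f + g)
        = (∫ x, (f - g) x * (β * (f + g) x - divg (aGrad a (f + g)) x))
          - γ * ∫ x, (f - g) x * ∑ i, b x i * pd (f + g) i x :=
      fun γ => EformGamma_decomp ha hb hu hv hcu hsu
    have hdec' : ∀ γ, EformGamma D a b β γ (f + g) (f - g)
        = (∫ x, (f + g) x * (β * (f - g) x - divg (aGrad a (f - g)) x))
          - γ * ∫ x, (f + g) x * ∑ i, b x i * pd (f - g) i x :=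
      fun γ => EformGamma_decomp ha hb hv hu hcv hsv
    have hBB := ibp_b hb hdivb hu hv hcu hcv hsu
    have hAA := A_symm (β := β) ha hsym hu hv hcu hcv
    rcases le_total (∫ x, (f - g) x * ∑ i, b x i * pd (f + g) i x) 0 with hB | hB
    · refine ⟨g, ⟨hg2, hgc, hgD, hgi⟩, Or.inl rfl, ?_⟩
      rw [hdec γ₁, hdec γ₂]
      have hmul := mul_le_mul_of_nonpos_right hγ₁₂ hB
      linarith
    · have hts : tsupport (-g) = tsupport g := by
        show closure _ = closure _
        exact congrArg closure (Function.support_neg g)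
      have hint : (∫ x in D, (-g) x) = 0 := by
        have hneg : (∫ x in D, (-g) x) = - ∫ x in D, g x := by
          simp [MeasureTheory.integral_neg]
        rw [hneg, hgi, neg_zero]
      refine ⟨-g, ⟨hg2.neg, hgc.neg, by rwa [hts], hint⟩, Or.inr rfl, ?_⟩
      have h1 : f - -g = f + g := sub_neg_eq_add f g
      have h2 : f + -g = f - g := (sub_eq_add_neg f g).symm
      rw [h1, h2, hdec γ₁, hdec' γ₂]
      have hBvu : (∫ x, (f + g) x * ∑ i, b x i * pd (f - g) i x)
          = - ∫ x, (f - g) x * ∑ i, b x i * pd (f + g) i x := by linarith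
      rw [hBvu]
      have hmul : 0 ≤ (γ₁ + γ₂) * ∫ x, (f - g) x * ∑ i, b x i * pd (f + g) i x :=
        mul_nonneg (by linarith) hB
      nlinarith
  refine ⟨main, ?_⟩
  apply iSup_le
  rintro ⟨g, hg⟩
  obtain ⟨g', hg', -, hle⟩ := main g hg
  exact le_trans (EReal.coe_le_coe_iff.mpr hle)
    (le_iSup (fun h : {g : (Fin d → ℝ) → ℝ // MemN00 D g} =>
      ((EformGamma D a b β γ₂ (f - h.1) (f + h.1) : ℝ) : EReal)) ⟨g', hg'⟩)
end
end

section
/- (Theorem 4.2, analytic form: monotonicity law.) Let D ⊆ ℝ^d be a bounded open set with the divergence property, let β ≥ 0, let a₁, a₂ have C¹ entries with a₁, a₂ symmetric, a₁(x) positive semidefinite for all x ∈ D, and v·a₁(x)v ≤ v·a₂(x)v for all x ∈ D and v ∈ ℝ^d, and let b have C¹ components with div(b) = 0 on an open neighborhood of the closure of D. Suppose u₁, u₂, ũ₂ are C² on an open neighborhood of the closure of D, vanish on ∂D, and satisfy (β − ∇·a₁∇)u₁ = 1, (β − ∇·a₂∇ − b·∇)u₂ = 1, and (β − ∇·a₂∇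 + b·∇)ũ₂ = 1 at every point of D, with ∫_D u₁ dx > 0 and ∫_D u₂ dx > 0. Then ∫_D u₂ dx ≤ ∫_D u₁ dx. (Probabilistically: the integrated Laplace transforms/mean exit times from D for the diffusion with coefficients (a₂,b) are dominated by those for the symmetric diffusion with coefficient a₁.) -/
open MeasureTheory

noncomputable section

namespace S17

variable {d : ℕ}

lemma pd_c1 {U : Set (Fin d → ℝ)} (hU : IsOpen U) {f : (Fin d → ℝ) → ℝ}
    (hf : ContDiffOn ℝ 2 f U) (i : Fin d) : ContDiffOn ℝ 1 (pd f i) U := by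
  have h := hf.fderiv_of_isOpen (m := 1) hU (by norm_num)
  exact (ContinuousLinearMap.apply ℝ ℝ (Pi.single i 1 : Fin d → ℝ)).contDiff.comp_contDiffOn h

lemma pd_cont {U : Set (Fin d → ℝ)} (hU : IsOpen U) {f : (Fin d → ℝ) → ℝ}
    (hf : ContDiffOn ℝ 1 f U) (i : Fin d) : ContinuousOn (pd f i) U := by
  have h := hf.fderiv_of_isOpen (m := 0) hU (by norm_num)
  exact ((ContinuousLinearMap.apply ℝ ℝ (Pi.single i 1 : Fin d → ℝ)).contDiff.comp_contDiffOn
    h).continuousOn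

lemma diffAt {U : Set (Fin d → ℝ)} (hU : IsOpen U) {f : (Fin d → ℝ) → ℝ}
    (hf : ContDiffOn ℝ 1 f U) {x : Fin d → ℝ} (hx : x ∈ U) : DifferentiableAt ℝ f x :=
  (hf.contDiffAt (hU.mem_nhds hx)).differentiableAt one_ne_zero

lemma aGrad_c1 {U : Set (Fin d → ℝ)} (hU : IsOpen U)
    {a : (Fin d → ℝ) → Matrix (Fin d) (Fin d) ℝ}
    (ha : ∀ i j, ContDiff ℝ 1 (fun x => a x i j))
    {g : (Fin d → ℝ) → ℝ} (hg : ContDiffOn ℝ 2 g U) (i : Fin d) :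
    ContDiffOn ℝ 1 (fun x => aGrad a g x i) U := by
  have : (fun x => aGrad a g x i) = fun x => ∑ j, a x i j * pd g j x := rfl
  rw [this]
  exact ContDiffOn.sum fun j _ => ((ha i j).contDiffOn).mul (pd_c1 hU hg j)

lemma divg_cont {U : Set (Fin d → ℝ)} (hU : IsOpen U)
    {F : (Fin d → ℝ) → (Fin d → ℝ)}
    (hF : ∀ i, ContDiffOn ℝ 1 (fun x => F x i) U) : ContinuousOn (divg F) U := by
  unfold divg
  refine continuousOn_finset_sum _ fun i _ => ?_
  have h := (hF i).fderiv_of_isOpen (m := 0) hU (by norm_num)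
  exact ((ContinuousLinearMap.apply ℝ ℝ (Pi.single i 1 : Fin d → ℝ)).contDiff.comp_contDiffOn
    h).continuousOn

lemma divg_mul {f : (Fin d → ℝ) → ℝ} {G : (Fin d → ℝ) → (Fin d → ℝ)} {x : Fin d → ℝ}
    (hf : DifferentiableAt ℝ f x) (hG : ∀ i, DifferentiableAt ℝ (fun y => G y i) x) :
    divg (fun y i => f y * G y i) x = (∑ i, pd f i x * G x i) + f x * divg G x := by
  have h1 : ∀ i : Fin d, fderiv ℝ (fun y => f y * G y i) x (Pi.single i 1)
      = pd f i x * G x i + f x * fderiv ℝ (fun y => G y i) x (Pi.single i 1) := by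
    intro i
    rw [fderiv_fun_mul hf (hG i)]
    simp [pd]
    ring
  calc divg (fun y i => f y * G y i) x
      = ∑ i, (pd f i x * G x i + f x * fderiv ℝ (fun y => G y i) x (Pi.single i 1)) :=
        Finset.sum_congr rfl fun i _ => h1 i
    _ = (∑ i, pd f i x * G x i) + f x * divg G x := by
        rw [Finset.sum_add_distrib, ← Finset.mul_sum]; rfl

lemma integrableOn_of_cont {D U : Set (Fin d → ℝ)} (hDb : Bornology.IsBounded D)
    (hcl : closure D ⊆ U) {h : (Fin d → ℝ) → ℝ} (hc : ContinuousOn h U) :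
    MeasureTheory.IntegrableOn h D := by
  exact ((hc.mono hcl).integrableOn_compact hDb.isCompact_closure).mono_set subset_closure

lemma quadF_cont {U : Set (Fin d → ℝ)} (hU : IsOpen U)
    {a : (Fin d → ℝ) → Matrix (Fin d) (Fin d) ℝ}
    (ha : ∀ i j, ContDiff ℝ 1 (fun x => a x i j))
    {f g : (Fin d → ℝ) → ℝ} (hf : ContDiffOn ℝ 2 f U) (hg : ContDiffOn ℝ 2 g U) :
    ContinuousOn (quadF a f g) U := by
  unfold quadF
  refine continuousOn_finset_sum _ fun i _ => continuousOn_finset_sum _ fun j _ => ?_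
  exact ((pd_cont hU (hf.of_le (by norm_num)) i).mul
    (ha i j).continuous.continuousOn).mul (pd_cont hU (hg.of_le (by norm_num)) j)

lemma ibp {D : Set (Fin d → ℝ)} (hD : IsOpen D) (hDb : Bornology.IsBounded D)
    (hdiv : DivProp D) {U : Set (Fin d → ℝ)} (hU : IsOpen U) (hcl : closure D ⊆ U)
    {a : (Fin d → ℝ) → Matrix (Fin d) (Fin d) ℝ}
    (ha : ∀ i j, ContDiff ℝ 1 (fun x => a x i j))
    {f g : (Fin d → ℝ) → ℝ} (hf : ContDiffOn ℝ 2 f U) (hg : ContDiffOn ℝ 2 g U)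
    (hf0 : ∀ x ∈ frontier D, f x = 0) :
    ∫ x in D, f x * divg (aGrad a g) x = - ∫ x in D, quadF a f g x := by
  have hag : ∀ i, ContDiffOn ℝ 1 (fun x => aGrad a g x i) U := aGrad_c1 hU ha hg
  have hdc : ContinuousOn (divg (aGrad a g)) U := divg_cont hU hag
  have hint1 : MeasureTheory.IntegrableOn (fun x => quadF a f g x) D :=
    integrableOn_of_cont hDb hcl (quadF_cont hU ha hf hg)
  have hint2 : MeasureTheory.IntegrableOn (fun x => f x * divg (aGrad a g) x) D :=
    integrableOn_of_cont hDb hcl (hf.continuousOn.mul hdc)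
  have key := hdiv (fun y i => f y * aGrad a g y i)
    ⟨U, hU, hcl, fun i => (hf.of_le (by norm_num)).mul (hag i)⟩
    (fun x hx => by funext i; simp [hf0 x hx])
  have hptw : ∀ x ∈ D, divg (fun y i => f y * aGrad a g y i) x
      = quadF a f g x + f x * divg (aGrad a g) x := by
    intro x hx
    have hxU : x ∈ U := hcl (subset_closure hx)
    rw [divg_mul (diffAt hU (hf.of_le (by norm_num)) hxU) (fun i => diffAt hU (hag i) hxU)]
    congr 1
    unfold quadF aGrad
    refine Finset.sum_congr rfl fun i _ => ?_
    rw [Finset.mul_sum]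
    exact Finset.sum_congr rfl fun j _ => by ring
  rw [MeasureTheory.setIntegral_congr_fun hD.measurableSet hptw,
    MeasureTheory.integral_add hint1 hint2] at key
  linarith

lemma bzero {D : Set (Fin d → ℝ)} (hD : IsOpen D) (hDb : Bornology.IsBounded D)
    (hdiv : DivProp D) {U : Set (Fin d → ℝ)} (hU : IsOpen U) (hcl : closure D ⊆ U)
    {b : (Fin d → ℝ) → (Fin d → ℝ)} (hb : ∀ i, ContDiff ℝ 1 (fun x => b x i))
    (hdivbU : ∀ x ∈ U, divg b x = 0)
    {f : (Fin d → ℝ) → ℝ} (hf : ContDiffOn ℝ 2 f U)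
    (hf0 : ∀ x ∈ frontier D, f x = 0) :
    ∫ x in D, f x * (∑ i, b x i * pd f i x) = 0 := by
  have hf1 : ContDiffOn ℝ 1 f U := hf.of_le (by norm_num)
  have key := hdiv (fun y i => (f y * f y) * b y i)
    ⟨U, hU, hcl, fun i => (hf1.mul hf1).mul (hb i).contDiffOn⟩
    (fun x hx => by funext i; simp [hf0 x hx])
  have hptw : ∀ x ∈ D, divg (fun y i => (f y * f y) * b y i) x
      = 2 * (f x * (∑ i, b x i * pd f i x)) := by
    intro x hx
    have hxU : x ∈ U := hcl (subset_closure hx)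
    have hfd : DifferentiableAt ℝ f x := diffAt hU hf1 hxU
    have hbd : ∀ i, DifferentiableAt ℝ (fun y => b y i) x :=
      fun i => ((hb i).differentiable one_ne_zero) x
    rw [divg_mul (f := fun y => f y * f y) (hfd.mul hfd) hbd, hdivbU x hxU]
    have hpd : ∀ i, pd (fun y => f y * f y) i x = 2 * (f x * pd f i x) := by
      intro i
      unfold pd
      rw [fderiv_fun_mul hfd hfd]
      simp [pd]
      ring
    simp only [hpd, mul_zero, add_zero, Finset.mul_sum]
    exact Finset.sum_congr rfl fun i _ => by ring
  rw [MeasureTheory.setIntegral_congr_fun hD.measurableSet hptw,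
    MeasureTheory.integral_const_mul] at key
  linarith

end S17

/-- Theorem 4.2, analytic form: monotonicity law comparing the diffusion with
coefficients `(a₂, b)` against the symmetric diffusion with coefficient `a₁ ≤ a₂`. -/
theorem stmt17 {d : ℕ} (D : Set (Fin d → ℝ)) (hD : IsOpen D)
    (hDb : Bornology.IsBounded D) (hdiv : DivProp D)
    (β : ℝ) (hβ : 0 ≤ β)
    (a₁ a₂ : (Fin d → ℝ) → Matrix (Fin d) (Fin d) ℝ)
    (ha₁ : ∀ i j, ContDiff ℝ 1 (fun x => a₁ x i j))
    (ha₂ : ∀ i j, ContDiff ℝ 1 (fun x => a₂ x i j))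
    (hsym₁ : ∀ x i j, a₁ x i j = a₁ x j i)
    (hsym₂ : ∀ x i j, a₂ x i j = a₂ x j i)
    (hpsd₁ : ∀ x ∈ D, ∀ v : Fin d → ℝ, 0 ≤ ∑ i, ∑ j, v i * a₁ x i j * v j)
    (hle : ∀ x ∈ D, ∀ v : Fin d → ℝ,
      (∑ i, ∑ j, v i * a₁ x i j * v j) ≤ ∑ i, ∑ j, v i * a₂ x i j * v j)
    (b : (Fin d → ℝ) → (Fin d → ℝ)) (hb : ∀ i, ContDiff ℝ 1 (fun x => b x i))
    (hdivb : ∃ U : Set (Fin d → ℝ), IsOpen U ∧ closure D ⊆ U ∧ ∀ x ∈ U, divg b x = 0)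
    (u₁ u₂ ut₂ : (Fin d → ℝ) → ℝ)
    (hu₁ : C2Near D u₁) (hu₁0 : ∀ x ∈ frontier D, u₁ x = 0)
    (hu₁eq : ∀ x ∈ D, β * u₁ x - divg (aGrad a₁ u₁) x = 1)
    (hu₂ : C2Near D u₂) (hu₂0 : ∀ x ∈ frontier D, u₂ x = 0)
    (hu₂eq : ∀ x ∈ D,
      β * u₂ x - (divg (aGrad a₂ u₂) x + ∑ i, b x i * pd u₂ i x) = 1)
    (hut₂ : C2Near D ut₂) (hut₂0 : ∀ x ∈ frontier D, ut₂ x = 0)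
    (hut₂eq : ∀ x ∈ D,
      β * ut₂ x - (divg (aGrad a₂ ut₂) x - ∑ i, b x i * pd ut₂ i x) = 1)
    (hpos₁ : 0 < ∫ x in D, u₁ x) (hpos₂ : 0 < ∫ x in D, u₂ x) :
    (∫ x in D, u₂ x) ≤ ∫ x in D, u₁ x := by
  classical
  obtain ⟨U₁, hU₁, hcl₁, hu₁C⟩ := hu₁
  obtain ⟨U₂, hU₂, hcl₂, hu₂C⟩ := hu₂
  obtain ⟨Ub, hUb, hclb, hdivbU⟩ := hdivb
  set U : Set (Fin d → ℝ) := U₁ ∩ (U₂ ∩ Ub) with hUdef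
  have hU : IsOpen U := hU₁.inter (hU₂.inter hUb)
  have hcl : closure D ⊆ U := fun x hx => ⟨hcl₁ hx, hcl₂ hx, hclb hx⟩
  have hf1 : ContDiffOn ℝ 2 u₁ U := hu₁C.mono fun x hx => hx.1
  have hf2 : ContDiffOn ℝ 2 u₂ U := hu₂C.mono fun x hx => hx.2.1
  have hdivbU' : ∀ x ∈ U, divg b x = 0 := fun x hx => hdivbU x hx.2.2
  -- continuity facts
  have hc1 : ContinuousOn u₁ U := hf1.continuousOn
  have hc2 : ContinuousOn u₂ U := hf2.continuousOn
  have hp2 : ∀ i, ContinuousOn (pd u₂ i) U := fun i => S17.pd_cont hU (hf2.of_le (by norm_num)) i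
  have hdg1 : ContinuousOn (divg (aGrad a₁ u₁)) U :=
    S17.divg_cont hU (S17.aGrad_c1 hU ha₁ hf1)
  have hdg2 : ContinuousOn (divg (aGrad a₂ u₂)) U :=
    S17.divg_cont hU (S17.aGrad_c1 hU ha₂ hf2)
  have hcb : ContinuousOn (fun x => ∑ i, b x i * pd u₂ i x) U :=
    continuousOn_finset_sum _ fun i _ => ((hb i).continuous.continuousOn).mul (hp2 i)
  have hq11 : ContinuousOn (quadF a₁ u₁ u₁) U := S17.quadF_cont hU ha₁ hf1 hf1
  have hq21 : ContinuousOn (quadF a₁ u₂ u₁) U := S17.quadF_cont hU ha₁ hf2 hf1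
  have hq22 : ContinuousOn (quadF a₂ u₂ u₂) U := S17.quadF_cont hU ha₂ hf2 hf2
  -- integrability
  have intOn : ∀ {h : (Fin d → ℝ) → ℝ}, ContinuousOn h U → MeasureTheory.IntegrableOn h D :=
    fun hc => S17.integrableOn_of_cont hDb hcl hc
  have intb11 : MeasureTheory.IntegrableOn (fun x => β * (u₁ x * u₁ x)) D :=
    intOn (continuousOn_const.mul (hc1.mul hc1))
  have intb12 : MeasureTheory.IntegrableOn (fun x => β * (u₁ x * u₂ x)) D :=
    intOn (continuousOn_const.mul (hc1.mul hc2))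
  have intb22 : MeasureTheory.IntegrableOn (fun x => β * (u₂ x * u₂ x)) D :=
    intOn (continuousOn_const.mul (hc2.mul hc2))
  have int1dg1 : MeasureTheory.IntegrableOn (fun x => u₁ x * divg (aGrad a₁ u₁) x) D :=
    intOn (hc1.mul hdg1)
  have int2dg1 : MeasureTheory.IntegrableOn (fun x => u₂ x * divg (aGrad a₁ u₁) x) D :=
    intOn (hc2.mul hdg1)
  have int2dg2 : MeasureTheory.IntegrableOn (fun x => u₂ x * divg (aGrad a₂ u₂) x) D :=
    intOn (hc2.mul hdg2)
  have int2b : MeasureTheory.IntegrableOn (fun x => u₂ x * (∑ i, b x i * pd u₂ i x)) D :=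
    intOn (hc2.mul hcb)
  have intq11 : MeasureTheory.IntegrableOn (fun x => quadF a₁ u₁ u₁ x) D := intOn hq11
  have intq21 : MeasureTheory.IntegrableOn (fun x => quadF a₁ u₂ u₁ x) D := intOn hq21
  have intq22 : MeasureTheory.IntegrableOn (fun x => quadF a₂ u₂ u₂ x) D := intOn hq22
  have intA : MeasureTheory.IntegrableOn (fun x => β * (u₁ x * u₁ x) + quadF a₁ u₁ u₁ x) D :=
    intOn (((continuousOn_const.mul (hc1.mul hc1))).add hq11)
  have intB : MeasureTheory.IntegrableOn (fun x => β * (u₂ x * u₂ x) + quadF a₂ u₂ u₂ x) D :=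
    intOn (((continuousOn_const.mul (hc2.mul hc2))).add hq22)
  have intR : MeasureTheory.IntegrableOn (fun x => β * (u₁ x * u₂ x) + quadF a₁ u₂ u₁ x) D :=
    intOn (((continuousOn_const.mul (hc1.mul hc2))).add hq21)
  -- E1 : ∫ u₁ = ∫ A
  have E1 : (∫ x in D, u₁ x) = ∫ x in D, (β * (u₁ x * u₁ x) + quadF a₁ u₁ u₁ x) := by
    have step : (∫ x in D, u₁ x)
        = ∫ x in D, (β * (u₁ x * u₁ x) - u₁ x * divg (aGrad a₁ u₁) x) := by
      refine MeasureTheory.setIntegral_congr_fun hD.measurableSet fun x hx => ?_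
      have h := hu₁eq x hx
      linear_combination (-(u₁ x)) * h
    have hsub := MeasureTheory.integral_sub intb11 int1dg1
    have hibp := S17.ibp hD hDb hdiv hU hcl ha₁ hf1 hf1 hu₁0
    have hadd := MeasureTheory.integral_add intb11 intq11
    rw [step, hsub, hibp, hadd]
    ring
  -- E3 : ∫ u₂ = ∫ R
  have E3 : (∫ x in D, u₂ x) = ∫ x in D, (β * (u₁ x * u₂ x) + quadF a₁ u₂ u₁ x) := by
    have step : (∫ x in D, u₂ x)
        = ∫ x in D, (β * (u₁ x * u₂ x) - u₂ x * divg (aGrad a₁ u₁) x) := by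
      refine MeasureTheory.setIntegral_congr_fun hD.measurableSet fun x hx => ?_
      have h := hu₁eq x hx
      linear_combination (-(u₂ x)) * h
    have hsub := MeasureTheory.integral_sub intb12 int2dg1
    have hibp := S17.ibp hD hDb hdiv hU hcl ha₁ hf2 hf1 hu₂0
    have hadd := MeasureTheory.integral_add intb12 intq21
    rw [step, hsub, hibp, hadd]
    ring
  -- E2 : ∫ u₂ = ∫ B
  have E2 : (∫ x in D, u₂ x) = ∫ x in D, (β * (u₂ x * u₂ x) + quadF a₂ u₂ u₂ x) := by
    have step : (∫ x in D, u₂ x)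
        = ∫ x in D, (β * (u₂ x * u₂ x) - u₂ x * divg (aGrad a₂ u₂) x
            - u₂ x * (∑ i, b x i * pd u₂ i x)) := by
      refine MeasureTheory.setIntegral_congr_fun hD.measurableSet fun x hx => ?_
      have h := hu₂eq x hx
      linear_combination (-(u₂ x)) * h
    have intbd : MeasureTheory.IntegrableOn
        (fun x => β * (u₂ x * u₂ x) - u₂ x * divg (aGrad a₂ u₂) x) D := intb22.sub int2dg2
    have hsub1 := MeasureTheory.integral_sub intbd int2b
    have hsub2 := MeasureTheory.integral_sub intb22 int2dg2
    have hibp := S17.ibp hD hDb hdiv hU hcl ha₂ hf2 hf2 hu₂0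
    have hbz := S17.bzero hD hDb hdiv hU hcl hb hdivbU' hf2 hu₂0
    have hadd := MeasureTheory.integral_add intb22 intq22
    rw [step]
    rw [hsub1, hsub2, hibp, hbz, hadd]
    ring
  -- main inequality for each t > 0
  have main : ∀ t : ℝ, 0 < t → (∫ x in D, u₂ x)
      ≤ (t/2) * (∫ x in D, u₁ x) + (1/(2*t)) * (∫ x in D, u₂ x) := by
    intro t ht
    have ptw : ∀ x ∈ D, β * (u₁ x * u₂ x) + quadF a₁ u₂ u₁ x
        ≤ (t/2) * (β * (u₁ x * u₁ x) + quadF a₁ u₁ u₁ x)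
          + (1/(2*t)) * (β * (u₂ x * u₂ x) + quadF a₂ u₂ u₂ x) := by
      intro x hx
      have hq := hpsd₁ x hx (fun i => t * pd u₁ i x - pd u₂ i x)
      have hsymQ : quadF a₁ u₁ u₂ x = quadF a₁ u₂ u₁ x := by
        unfold quadF
        rw [Finset.sum_comm]
        exact Finset.sum_congr rfl fun i _ => Finset.sum_congr rfl fun j _ => by
          rw [hsym₁ x j i]; ring
      have hexp : ∑ i, ∑ j, (t * pd u₁ i x - pd u₂ i x) * a₁ x i j
            * (t * pd u₁ j x - pd u₂ j x)
          = t^2 * quadF a₁ u₁ u₁ x - t * quadF a₁ u₁ u₂ x - t * quadF a₁ u₂ u₁ x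
            + quadF a₁ u₂ u₂ x := by
        unfold quadF
        simp only [Finset.mul_sum, ← Finset.sum_sub_distrib, ← Finset.sum_add_distrib]
        exact Finset.sum_congr rfl fun i _ => Finset.sum_congr rfl fun j _ => by ring
      have h3 : 0 ≤ t^2 * quadF a₁ u₁ u₁ x - 2*t * quadF a₁ u₂ u₁ x
          + quadF a₁ u₂ u₂ x := by
        rw [hexp, hsymQ] at hq
        linarith
      have hle2 : quadF a₁ u₂ u₂ x ≤ quadF a₂ u₂ u₂ x := hle x hx (fun i => pd u₂ i x)
      have hsq : 0 ≤ β * (t * u₁ x - u₂ x)^2 := mul_nonneg hβ (sq_nonneg _)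
      have key2 : 2*t*(β * (u₁ x * u₂ x) + quadF a₁ u₂ u₁ x)
          ≤ t^2 * (β * (u₁ x * u₁ x) + quadF a₁ u₁ u₁ x)
            + (β * (u₂ x * u₂ x) + quadF a₂ u₂ u₂ x) := by nlinarith [h3, hle2, hsq]
      calc β * (u₁ x * u₂ x) + quadF a₁ u₂ u₁ x
          = (1/(2*t)) * (2*t*(β * (u₁ x * u₂ x) + quadF a₁ u₂ u₁ x)) := by
            field_simp
        _ ≤ (1/(2*t)) * (t^2 * (β * (u₁ x * u₁ x) + quadF a₁ u₁ u₁ x)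
              + (β * (u₂ x * u₂ x) + quadF a₂ u₂ u₂ x)) := by
            apply mul_le_mul_of_nonneg_left key2 (by positivity)
        _ = (t/2) * (β * (u₁ x * u₁ x) + quadF a₁ u₁ u₁ x)
              + (1/(2*t)) * (β * (u₂ x * u₂ x) + quadF a₂ u₂ u₂ x) := by
            field_simp
    have intS : MeasureTheory.IntegrableOn (fun x =>
        (t/2) * (β * (u₁ x * u₁ x) + quadF a₁ u₁ u₁ x)
          + (1/(2*t)) * (β * (u₂ x * u₂ x) + quadF a₂ u₂ u₂ x)) D :=
      (intA.const_mul (t/2)).add (intB.const_mul (1/(2*t)))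
    have hMono := MeasureTheory.setIntegral_mono_on intR intS hD.measurableSet ptw
    have hadd := MeasureTheory.integral_add (μ := MeasureTheory.volume.restrict D)
      (intA.const_mul (t/2)) (intB.const_mul (1/(2*t)))
    calc (∫ x in D, u₂ x)
        = ∫ x in D, (β * (u₁ x * u₂ x) + quadF a₁ u₂ u₁ x) := E3
      _ ≤ ∫ x in D, ((t/2) * (β * (u₁ x * u₁ x) + quadF a₁ u₁ u₁ x)
            + (1/(2*t)) * (β * (u₂ x * u₂ x) + quadF a₂ u₂ u₂ x)) := hMono
      _ = (∫ x in D, (t/2) * (β * (u₁ x * u₁ x) + quadF a₁ u₁ u₁ x))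
            + ∫ x in D, (1/(2*t)) * (β * (u₂ x * u₂ x) + quadF a₂ u₂ u₂ x) := hadd
      _ = (t/2) * (∫ x in D, (β * (u₁ x * u₁ x) + quadF a₁ u₁ u₁ x))
            + (1/(2*t)) * (∫ x in D, (β * (u₂ x * u₂ x) + quadF a₂ u₂ u₂ x)) := by
          rw [MeasureTheory.integral_const_mul, MeasureTheory.integral_const_mul]
      _ = (t/2) * (∫ x in D, u₁ x) + (1/(2*t)) * (∫ x in D, u₂ x) := by
          rw [← E1, ← E2]
  -- optimize t
  set I₁ := ∫ x in D, u₁ x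
  set I₂ := ∫ x in D, u₂ x
  set t := Real.sqrt (I₂ / I₁) with htdef
  have ht : 0 < t := Real.sqrt_pos.mpr (div_pos hpos₂ hpos₁)
  have ht2 : t^2 = I₂ / I₁ := Real.sq_sqrt (le_of_lt (div_pos hpos₂ hpos₁))
  have ht3 : t^2 * I₁ = I₂ := by rw [ht2]; field_simp
  have hmain := main t ht
  have h5 : 2*t*I₂ ≤ 2*t*((t/2)*I₁ + (1/(2*t))*I₂) := by nlinarith [hmain, ht]
  have h6 : 2*t*((t/2)*I₁ + (1/(2*t))*I₂) = t^2*I₁ + I₂ := by field_simp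
  have h7 : t ≤ 1 := by nlinarith [h5, h6, ht3, hpos₂]
  have h8 : t^2 ≤ 1 := by nlinarith [h7, ht]
  nlinarith [h8, ht3, hpos₁]
end
end
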